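/- arXiv:2204.04757 — 9 statements merged into one kernel-verified Lean document; each statement's English description precedes it below -/
import Mathlib

section
/- The log-likelihood function ℓ(θ) = θ·t − ln(Σ_{g ∈ 𝒢_k} e^{θ·z(g)}) is strictly concave on ℝⁿ if and only if the affine span of the image z(𝒢_k) is all of ℝⁿ (equivalently, if and only if the convex hull C of z(𝒢_k) has dimension n). -/
open scoped RealInnerProductSpace BigOperators

/-- Strict log-sum-exp inequality: if the differences `A i - B i` are not all equal,
then `log ∑ exp (a*A + b*B) < a * log ∑ exp A + b * log ∑ exp B`. -/
lemma aux_logsumexp_strict {ι : Type*} [Fintype ι] (A B : ι → ℝ) (a b : ℝ)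
    (ha : 0 < a) (hb : 0 < b) (hab : a + b = 1)
    (hne : ∃ i j : ι, A i - B i ≠ A j - B j) :
    Real.log (∑ i, Real.exp (a * A i + b * B i)) <
      a * Real.log (∑ i, Real.exp (A i)) + b * Real.log (∑ i, Real.exp (B i)) := by
  obtain ⟨i0, j0, hij0⟩ := hne
  have hιne : Nonempty ι := ⟨i0⟩
  have hZm : (0:ℝ) < ∑ i, Real.exp (a * A i + b * B i) :=
    Finset.sum_pos (fun i _ => Real.exp_pos _) Finset.univ_nonempty
  have hZ1 : (0:ℝ) < ∑ i, Real.exp (A i) :=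
    Finset.sum_pos (fun i _ => Real.exp_pos _) Finset.univ_nonempty
  have hZ2 : (0:ℝ) < ∑ i, Real.exp (B i) :=
    Finset.sum_pos (fun i _ => Real.exp_pos _) Finset.univ_nonempty
  set Zm := ∑ i, Real.exp (a * A i + b * B i) with hZmdef
  set w : ι → ℝ := fun i => Real.exp (a * A i + b * B i) / Zm with hwdef
  have hw0 : ∀ i ∈ Finset.univ (α := ι), 0 < w i := fun i _ =>
    div_pos (Real.exp_pos _) hZm
  have hw1 : ∑ i, w i = 1 := by
    rw [hwdef, ← Finset.sum_div]
    field_simp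
    exact hZmdef.symm
  set E := ∑ i, w i * (A i - B i) with hEdef
  -- first strict Jensen: points b*(A i - B i)
  have key1 : Real.exp (∑ i, w i • (b * (A i - B i))) <
      ∑ i, w i • Real.exp (b * (A i - B i)) := by
    refine strictConvexOn_exp.map_sum_lt hw0 hw1 (fun i _ => Set.mem_univ _) ?_
    exact ⟨i0, Finset.mem_univ _, j0, Finset.mem_univ _, by
      intro hc
      exact hij0 (mul_left_cancel₀ (ne_of_gt hb) hc)⟩
  have key2 : Real.exp (∑ i, w i • (-a * (A i - B i))) <
      ∑ i, w i • Real.exp (-a * (A i - B i)) := by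
    refine strictConvexOn_exp.map_sum_lt hw0 hw1 (fun i _ => Set.mem_univ _) ?_
    refine ⟨i0, Finset.mem_univ _, j0, Finset.mem_univ _, fun hc => ?_⟩
    exact hij0 (mul_left_cancel₀ (by simpa using ne_of_gt ha) hc)
  -- compute the RHS's
  have hr1 : ∑ i, w i • Real.exp (b * (A i - B i)) = (∑ i, Real.exp (A i)) / Zm := by
    rw [Finset.sum_div]
    refine Finset.sum_congr rfl fun i _ => ?_
    rw [smul_eq_mul, hwdef]
    rw [div_mul_eq_mul_div, ← Real.exp_add]
    congr 2
    linear_combination A i * hab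
  have hr2 : ∑ i, w i • Real.exp (-a * (A i - B i)) = (∑ i, Real.exp (B i)) / Zm := by
    rw [Finset.sum_div]
    refine Finset.sum_congr rfl fun i _ => ?_
    rw [smul_eq_mul, hwdef]
    rw [div_mul_eq_mul_div, ← Real.exp_add]
    congr 2
    linear_combination B i * hab
  have hl1 : ∑ i, w i • (b * (A i - B i)) = b * E := by
    rw [hEdef, Finset.mul_sum]
    exact Finset.sum_congr rfl fun i _ => by rw [smul_eq_mul]; ring
  have hl2 : ∑ i, w i • (-a * (A i - B i)) = -a * E := by
    rw [hEdef, Finset.mul_sum]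
    exact Finset.sum_congr rfl fun i _ => by rw [smul_eq_mul]; ring
  rw [hl1, hr1] at key1
  rw [hl2, hr2] at key2
  have h1 : b * E < Real.log (∑ i, Real.exp (A i)) - Real.log Zm := by
    have := Real.log_lt_log (Real.exp_pos _) key1
    rwa [Real.log_exp, Real.log_div (ne_of_gt hZ1) (ne_of_gt hZm)] at this
  have h2 : -a * E < Real.log (∑ i, Real.exp (B i)) - Real.log Zm := by
    have := Real.log_lt_log (Real.exp_pos _) key2
    rwa [Real.log_exp, Real.log_div (ne_of_gt hZ2) (ne_of_gt hZm)] at this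
  have hcomb : a * Real.log Zm + b * Real.log Zm = Real.log Zm := by
    linear_combination Real.log Zm * hab
  nlinarith [mul_lt_mul_of_pos_left h1 ha, mul_lt_mul_of_pos_left h2 hb, hcomb]

/-- The log-likelihood `ℓ θ = θ·t − ln(Σ_{g ∈ 𝒢_k} e^{θ·z(g)})` is strictly concave on `ℝⁿ`
if and only if the affine span of the image `z(𝒢_k)` is all of `ℝⁿ` (equivalently, the convex
hull of `z(𝒢_k)` has dimension `n`). -/
theorem ergm_loglikelihood_strictConcave_iff (k n : ℕ) (hk : 0 < k) (hn : 0 < n)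
    (z : SimpleGraph (Fin k) → EuclideanSpace ℝ (Fin n))
    (t : EuclideanSpace ℝ (Fin n)) :
    StrictConcaveOn ℝ Set.univ (fun θ : EuclideanSpace ℝ (Fin n) =>
      ⟪θ, t⟫ - Real.log (∑ g : SimpleGraph (Fin k), Real.exp ⟪θ, z g⟫)) ↔
    affineSpan ℝ (Set.range z) = ⊤ := by
  have hrangene : (Set.range z).Nonempty := ⟨z ⊥, Set.mem_range_self _⟩
  constructor
  · -- strict concavity → full affine span
    intro hsc
    by_contra hne
    -- get a nonzero vector orthogonal to the vector span
    have hvs : vectorSpan ℝ (Set.range z) ≠ ⊤ := by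
      intro hvt
      exact hne ((AffineSubspace.affineSpan_eq_top_iff_vectorSpan_eq_top_of_nonempty (k := ℝ) (V := EuclideanSpace ℝ (Fin n)) (P := EuclideanSpace ℝ (Fin n)) hrangene).mpr hvt)
    have hperp : (vectorSpan ℝ (Set.range z))ᗮ ≠ ⊥ := by
      intro hbot
      exact hvs (Submodule.orthogonal_eq_bot_iff.mp hbot)
    obtain ⟨v, hvmem, hv0⟩ := Submodule.exists_mem_ne_zero_of_ne_bot hperp
    -- all inner products ⟪v, z g⟫ are equal
    set c : ℝ := ⟪v, z ⊥⟫ with hcdef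
    have hconst : ∀ g, ⟪v, z g⟫ = c := by
      intro g
      have hmem : z g -ᵥ z ⊥ ∈ vectorSpan ℝ (Set.range z) :=
        vsub_mem_vectorSpan ℝ (Set.mem_range_self _) (Set.mem_range_self _)
      have := (Submodule.mem_orthogonal _ v).mp hvmem _ hmem
      have h2 : ⟪v, z g - z ⊥⟫ = 0 := by rwa [real_inner_comm] at this
      rw [inner_sub_right] at h2
      linarith [h2]
    -- derive a contradiction from strict concavity along the line through 0 and v
    have hN : (0:ℝ) < (Fintype.card (SimpleGraph (Fin k)) : ℝ) := by
      exact_mod_cast Fintype.card_pos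
    have hlog : ∀ s : ℝ, Real.log (∑ g : SimpleGraph (Fin k), Real.exp ⟪s • v, z g⟫) =
        Real.log (Fintype.card (SimpleGraph (Fin k)) : ℝ) + s * c := by
      intro s
      have : ∀ g : SimpleGraph (Fin k), Real.exp ⟪s • v, z g⟫ = Real.exp (s * c) := by
        intro g
        rw [real_inner_smul_left, hconst g]
      rw [Finset.sum_congr rfl fun g _ => this g, Finset.sum_const, Finset.card_univ,
        nsmul_eq_mul, Real.log_mul (ne_of_gt hN) (ne_of_gt (Real.exp_pos _)), Real.log_exp]
    have hkey := hsc.2 (Set.mem_univ (0 : EuclideanSpace ℝ (Fin n))) (Set.mem_univ v)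
      (by simpa using (Ne.symm hv0)) (by norm_num : (0:ℝ) < 1/2) (by norm_num : (0:ℝ) < 1/2)
      (by norm_num : (1:ℝ)/2 + 1/2 = 1)
    simp only [smul_eq_mul] at hkey
    have e0 : ((1:ℝ)/2) • (0 : EuclideanSpace ℝ (Fin n)) + ((1:ℝ)/2) • v
        = ((1:ℝ)/2) • v := by simp
    rw [e0] at hkey
    have h1 : ⟪((1:ℝ)/2) • v, t⟫ = (1/2) * ⟪v, t⟫ := real_inner_smul_left _ _ _
    have h2 := hlog (1/2)
    have h3 := hlog 1
    have h4 := hlog 0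
    rw [one_smul] at h3
    rw [zero_smul] at h4
    rw [h1, h2] at hkey
    rw [h3] at hkey
    rw [h4] at hkey
    simp only [inner_zero_left] at hkey
    linarith [hkey]
  · -- full affine span → strict concavity
    intro h
    refine ⟨convex_univ, fun x _ y _ hxy a b ha hb hab => ?_⟩
    -- the inner products with z are not all translates
    have hne : ∃ g g' : SimpleGraph (Fin k),
        ⟪x, z g⟫ - ⟪y, z g⟫ ≠ ⟪x, z g'⟫ - ⟪y, z g'⟫ := by
      by_contra hc
      push_neg at hc
      apply hxy
      have hxysub : x - y = 0 := by
        have hvs : vectorSpan ℝ (Set.range z) = ⊤ :=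
          AffineSubspace.vectorSpan_eq_top_of_affineSpan_eq_top (k := ℝ) (V := EuclideanSpace ℝ (Fin n)) (P := EuclideanSpace ℝ (Fin n)) h
        have hker : vectorSpan ℝ (Set.range z) ≤
            LinearMap.ker ((innerSL ℝ (x - y) : EuclideanSpace ℝ (Fin n) →L[ℝ] ℝ) : EuclideanSpace ℝ (Fin n) →ₗ[ℝ] ℝ) := by
          rw [vectorSpan_def]
          rw [Submodule.span_le]
          rintro u hu
          rw [Set.mem_vsub] at hu
          obtain ⟨p, ⟨g, rfl⟩, q, ⟨g', rfl⟩, rfl⟩ := hu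
          have := hc g g'
          simp only [SetLike.mem_coe, LinearMap.mem_ker]
          show ⟪x - y, z g -ᵥ z g'⟫ = 0
          have : ⟪x - y, z g - z g'⟫ = (⟪x, z g⟫ - ⟪y, z g⟫) - (⟪x, z g'⟫ - ⟪y, z g'⟫) := by
            rw [inner_sub_left, inner_sub_right, inner_sub_right]; ring
          rw [show z g -ᵥ z g' = z g - z g' from rfl, this, hc g g', sub_self]
        have hmem : x - y ∈ vectorSpan ℝ (Set.range z) := hvs ▸ Submodule.mem_top
        have := hker hmem
        rw [LinearMap.mem_ker] at this
        have hinner : ⟪x - y, x - y⟫ = 0 := this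
        exact inner_self_eq_zero.mp hinner
      exact sub_eq_zero.mp hxysub
    -- apply the strict log-sum-exp inequality
    have key := aux_logsumexp_strict (fun g => ⟪x, z g⟫) (fun g => ⟪y, z g⟫) a b ha hb hab hne
    have hir : ∀ g, ⟪a • x + b • y, z g⟫ = a * ⟪x, z g⟫ + b * ⟪y, z g⟫ := by
      intro g
      rw [inner_add_left, real_inner_smul_left, real_inner_smul_left]
    have hsum : (∑ g : SimpleGraph (Fin k), Real.exp ⟪a • x + b • y, z g⟫)
        = ∑ g : SimpleGraph (Fin k), Real.exp (a * ⟪x, z g⟫ + b * ⟪y, z g⟫) :=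
      Finset.sum_congr rfl fun g _ => by rw [hir g]
    have hit : ⟪a • x + b • y, t⟫ = a * ⟪x, t⟫ + b * ⟪y, t⟫ := by
      rw [inner_add_left, real_inner_smul_left, real_inner_smul_left]
    simp only [smul_eq_mul]
    rw [hsum, hit]
    linarith [key]
end

section
/- A parameter θ̂ ∈ ℝⁿ satisfies L(θ̂) = sup_{θ ∈ ℝⁿ} L(θ) (equivalently, θ̂ is a global maximizer of the log-likelihood ℓ) if and only if the gradient of ℓ vanishes at θ̂, i.e., ∇ℓ(θ̂) = 0. -/
open scoped RealInnerProductSpace BigOperators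

section ErgmAux

variable {k n : ℕ}

private noncomputable def ergmS (z : SimpleGraph (Fin k) → EuclideanSpace ℝ (Fin n))
    (θ : EuclideanSpace ℝ (Fin n)) : ℝ :=
  ∑ g : SimpleGraph (Fin k), Real.exp ⟪θ, z g⟫

private lemma ergmS_pos (z : SimpleGraph (Fin k) → EuclideanSpace ℝ (Fin n))
    (θ : EuclideanSpace ℝ (Fin n)) : 0 < ergmS z θ := by
  have : Nonempty (SimpleGraph (Fin k)) := ⟨⊥⟩
  exact Finset.sum_pos (fun g _ => Real.exp_pos _) Finset.univ_nonempty

private lemma ergm_hasGradientAt (z : SimpleGraph (Fin k) → EuclideanSpace ℝ (Fin n))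
    (t : EuclideanSpace ℝ (Fin n)) (θ : EuclideanSpace ℝ (Fin n)) :
    HasGradientAt (fun θ => ⟪θ, t⟫ - Real.log (∑ g : SimpleGraph (Fin k), Real.exp ⟪θ, z g⟫))
      (t - (ergmS z θ)⁻¹ • ∑ g : SimpleGraph (Fin k), Real.exp ⟪θ, z g⟫ • z g) θ := by
  classical
  have h1 : HasFDerivAt (fun θ : EuclideanSpace ℝ (Fin n) => ⟪θ, t⟫)
      (innerSL ℝ t) θ := by
    have := (innerSL ℝ t).hasFDerivAt (x := θ)
    refine this.congr_of_eventuallyEq (Filter.Eventually.of_forall fun x => ?_)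
    exact real_inner_comm t x
  have hS : HasFDerivAt (fun θ : EuclideanSpace ℝ (Fin n) =>
        ∑ g : SimpleGraph (Fin k), Real.exp ⟪θ, z g⟫)
      (∑ g : SimpleGraph (Fin k), Real.exp ⟪θ, z g⟫ • innerSL ℝ (z g)) θ := by
    refine HasFDerivAt.fun_sum fun g _ => ?_
    have hg : HasFDerivAt (fun θ : EuclideanSpace ℝ (Fin n) => ⟪θ, z g⟫)
        (innerSL ℝ (z g)) θ := by
      have := (innerSL ℝ (z g)).hasFDerivAt (x := θ)
      refine this.congr_of_eventuallyEq (Filter.Eventually.of_forall fun x => ?_)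
      exact real_inner_comm (z g) x
    exact hg.exp
  have hlog := (hS.log (ne_of_gt (ergmS_pos z θ)))
  have hD := h1.sub hlog
  have hE : (innerSL ℝ t - (∑ g : SimpleGraph (Fin k), Real.exp ⟪θ, z g⟫)⁻¹ •
        ∑ g : SimpleGraph (Fin k), Real.exp ⟪θ, z g⟫ • innerSL ℝ (z g))
      = (InnerProductSpace.toDual ℝ (EuclideanSpace ℝ (Fin n)))
        (t - (∑ g : SimpleGraph (Fin k), Real.exp ⟪θ, z g⟫)⁻¹ •
          ∑ g : SimpleGraph (Fin k), Real.exp ⟪θ, z g⟫ • z g) := by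
    ext w
    simp only [ContinuousLinearMap.sub_apply, ContinuousLinearMap.smul_apply,
      ContinuousLinearMap.coe_sum', Finset.sum_apply, innerSL_apply_apply, smul_eq_mul,
      InnerProductSpace.toDual_apply_apply, inner_sub_left, real_inner_smul_left, sum_inner]
  have h := hD.hasGradientAt
  rw [hE, LinearIsometryEquiv.symm_apply_apply] at h
  exact h

end ErgmAux

/-- `θhat` is a global maximizer of the likelihood `L` (equivalently of the log-likelihood `ℓ`)
if and only if the gradient of `ℓ` vanishes at `θhat`. -/
theorem ergm_maximizer_iff_gradient_zero (k n : ℕ) (hk : 0 < k) (hn : 0 < n)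
    (z : SimpleGraph (Fin k) → EuclideanSpace ℝ (Fin n))
    (t : EuclideanSpace ℝ (Fin n))
    (ℓ : EuclideanSpace ℝ (Fin n) → ℝ)
    (hℓ : ℓ = fun θ => ⟪θ, t⟫ - Real.log (∑ g : SimpleGraph (Fin k), Real.exp ⟪θ, z g⟫))
    (L : EuclideanSpace ℝ (Fin n) → ℝ) (hL : L = fun θ => Real.exp (ℓ θ))
    (θhat : EuclideanSpace ℝ (Fin n)) :
    (∀ θ : EuclideanSpace ℝ (Fin n), L θ ≤ L θhat) ↔ gradient ℓ θhat = 0 := by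
  classical
  subst hℓ hL
  constructor
  · intro hmax
    have hℓmax : IsLocalMax
        (fun θ => ⟪θ, t⟫ - Real.log (∑ g : SimpleGraph (Fin k), Real.exp ⟪θ, z g⟫)) θhat :=
      Filter.Eventually.of_forall fun θ => Real.exp_le_exp.mp (hmax θ)
    have h0 := hℓmax.fderiv_eq_zero
    simp only [gradient, h0, map_zero]
  · intro hgrad
    have hG := ergm_hasGradientAt z t θhat
    rw [hG.gradient] at hgrad
    have ht : t = (ergmS z θhat)⁻¹ • ∑ g : SimpleGraph (Fin k), Real.exp ⟪θhat, z g⟫ • z g :=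
      sub_eq_zero.mp hgrad
    intro θ
    rw [Real.exp_le_exp]
    set S := ergmS z θhat with hSdef
    have hSpos : 0 < S := ergmS_pos z θhat
    set v := θ - θhat with hv
    have hw1 : ∑ g : SimpleGraph (Fin k), Real.exp ⟪θhat, z g⟫ / S = 1 := by
      rw [← Finset.sum_div]
      exact div_self (ne_of_gt hSpos)
    have hjensen : Real.exp (∑ g : SimpleGraph (Fin k), (Real.exp ⟪θhat, z g⟫ / S) • ⟪v, z g⟫)
        ≤ ∑ g : SimpleGraph (Fin k), (Real.exp ⟪θhat, z g⟫ / S) • Real.exp ⟪v, z g⟫ :=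
      convexOn_exp.map_sum_le
        (fun g _ => div_nonneg (Real.exp_pos _).le hSpos.le) hw1 (fun g _ => Set.mem_univ _)
    have hinner : ⟪v, t⟫ = ∑ g : SimpleGraph (Fin k), (Real.exp ⟪θhat, z g⟫ / S) • ⟪v, z g⟫ := by
      rw [ht, real_inner_smul_right, inner_sum, Finset.mul_sum]
      refine Finset.sum_congr rfl fun g _ => ?_
      rw [real_inner_smul_right, smul_eq_mul, div_eq_mul_inv]
      ring
    have hsum : ∑ g : SimpleGraph (Fin k), (Real.exp ⟪θhat, z g⟫ / S) • Real.exp ⟪v, z g⟫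
        = ergmS z θ / S := by
      show _ = (∑ g : SimpleGraph (Fin k), Real.exp ⟪θ, z g⟫) / S
      rw [Finset.sum_div]
      refine Finset.sum_congr rfl fun g _ => ?_
      rw [smul_eq_mul, div_mul_eq_mul_div, ← Real.exp_add]
      congr 2
      rw [hv, inner_sub_left]
      ring
    rw [hsum, ← hinner] at hjensen
    have hlog : ⟪v, t⟫ ≤ Real.log (ergmS z θ) - Real.log S := by
      have h := Real.log_le_log (Real.exp_pos _) hjensen
      rwa [Real.log_exp, Real.log_div (ne_of_gt (ergmS_pos z θ)) (ne_of_gt hSpos)] at h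
    have hvt : ⟪v, t⟫ = ⟪θ, t⟫ - ⟪θhat, t⟫ := by rw [hv, inner_sub_left]
    show ⟪θ, t⟫ - Real.log (∑ g : SimpleGraph (Fin k), Real.exp ⟪θ, z g⟫)
        ≤ ⟪θhat, t⟫ - Real.log (∑ g : SimpleGraph (Fin k), Real.exp ⟪θhat, z g⟫)
    have h1 : (∑ g : SimpleGraph (Fin k), Real.exp ⟪θ, z g⟫) = ergmS z θ := rfl
    have h2 : (∑ g : SimpleGraph (Fin k), Real.exp ⟪θhat, z g⟫) = S := rfl
    rw [h1, h2]
    rw [hvt] at hlog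
    linarith
end

section
/- If the likelihood L attains its supremum, i.e., there exists θ̂ ∈ ℝⁿ with L(θ̂) = sup_{θ ∈ ℝⁿ} L(θ), then the target vector t lies in the relative interior (intrinsic interior) of the convex hull C of z(𝒢_k). -/
open scoped RealInnerProductSpace BigOperators

theorem posCombo_mem_intrinsicInterior {E : Type*} [NormedAddCommGroup E] [NormedSpace ℝ E]
    [FiniteDimensional ℝ E] {ι : Type*} [Fintype ι] [Nonempty ι]
    (z : ι → E) (w : ι → ℝ) (hw : ∀ i, 0 < w i) (hw1 : ∑ i, w i = 1) :
    (∑ i, w i • z i) ∈ intrinsicInterior ℝ (convexHull ℝ (Set.range z)) := by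
  classical
  set t := ∑ i, w i • z i with ht
  set C := convexHull ℝ (Set.range z) with hC
  have htC : t ∈ C := by
    have := Finset.centerMass_mem_convexHull (Finset.univ) (fun i _ => (hw i).le)
      (by rw [hw1]; exact one_pos) (fun i _ => Set.mem_range_self (f := z) i)
    rwa [Finset.centerMass, hw1, inv_one, one_smul] at this
  obtain ⟨i₀⟩ := ‹Nonempty ι›
  set u : ι → E := fun i => z i - z i₀ with hu
  set V := vectorSpan ℝ (Set.range z) with hV
  have hspan : V = Submodule.span ℝ (Set.range u) := by
    simpa [hu, vsub_eq_sub] using vectorSpan_range_eq_span_range_vsub_right ℝ z i₀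
  have humem : ∀ i, u i ∈ V := fun i => by rw [hspan]; exact Submodule.subset_span ⟨i, rfl⟩
  let φ : (ι → ℝ) →ₗ[ℝ] V :=
    { toFun := fun c => ⟨∑ i, c i • u i,
        Submodule.sum_mem _ fun i _ => Submodule.smul_mem _ _ (humem i)⟩
      map_add' := by
        intro a b; apply Subtype.ext
        simp [add_smul, Finset.sum_add_distrib]
      map_smul' := by
        intro r a; apply Subtype.ext
        simp [smul_smul, Finset.smul_sum] }
  have hφsurj : LinearMap.range φ = ⊤ := by
    rw [LinearMap.range_eq_top]
    intro v
    have hv : (v : E) ∈ Submodule.span ℝ (Set.range u) := by rw [← hspan]; exact v.2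
    obtain ⟨c, hc⟩ := (Submodule.mem_span_range_iff_exists_fun ℝ).1 hv
    exact ⟨c, Subtype.ext hc⟩
  obtain ⟨ψ, hψ⟩ := φ.exists_rightInverse_of_surjective hφsurj
  have hψc : Continuous ψ := ψ.continuous_of_finiteDimensional
  have hg : Continuous fun v : V => ∑ i, |ψ v i| := by
    apply continuous_finset_sum
    intro i _
    exact ((continuous_apply i).comp hψc).abs
  set m := Finset.univ.inf' (Finset.univ_nonempty) w with hm
  have hmpos : 0 < m := by
    obtain ⟨i, _, hi⟩ := Finset.exists_mem_eq_inf' (Finset.univ_nonempty) w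
    rw [hm, hi]; exact hw i
  have hm2 : 0 < m / 2 := by linarith
  obtain ⟨ε, hε, hball⟩ := Metric.continuousAt_iff.1 hg.continuousAt (m / 2) hm2
  have htA : t ∈ affineSpan ℝ C := subset_affineSpan ℝ C htC
  have hA : affineSpan ℝ C = affineSpan ℝ (Set.range z) := affineSpan_convexHull _
  -- main claim
  have claim : ∀ x : E, x ∈ affineSpan ℝ C → ‖x - t‖ < ε → x ∈ C := by
    intro x hxA hxd
    have hxA' : x ∈ affineSpan ℝ (Set.range z) := by rw [← hA]; exact hxA
    have htA' : t ∈ affineSpan ℝ (Set.range z) := by rw [← hA]; exact htA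
    have hvV : x - t ∈ V := by
      have := AffineSubspace.vsub_mem_direction hxA' htA'
      rwa [direction_affineSpan, vsub_eq_sub] at this
    set vv : V := ⟨x - t, hvV⟩ with hvv
    set c : ι → ℝ := fun i => ψ vv i with hcdef
    have hc : ∑ i, c i • u i = x - t := by
      have := LinearMap.congr_fun hψ vv
      exact congrArg Subtype.val this
    have hsmall : ∑ i, |c i| < m / 2 := by
      have hd : dist vv 0 < ε := by
        rw [Subtype.dist_eq, dist_eq_norm]
        simpa using hxd
      have := hball hd
      rw [Real.dist_eq] at this
      have h0 : ∑ i, |ψ (0 : V) i| = 0 := by simp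
      rw [h0, sub_zero] at this
      exact lt_of_abs_lt this
    set a : ι → ℝ := fun i => w i + c i - (if i = i₀ then ∑ j, c j else 0) with hadef
    have ha0 : ∀ i, 0 ≤ a i := by
      intro i
      have h1 : |c i| ≤ ∑ j, |c j| :=
        Finset.single_le_sum (fun j _ => abs_nonneg (c j)) (Finset.mem_univ i)
      have h2 : |∑ j, c j| ≤ ∑ j, |c j| := Finset.abs_sum_le_sum_abs _ _
      have hwi : m ≤ w i := Finset.inf'_le w (Finset.mem_univ i)
      have hci : -(m/2) < c i := by
        have := neg_abs_le (c i); linarith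
      by_cases hii : i = i₀
      · have hsc : ∑ j, c j ≤ |∑ j, c j| := le_abs_self _
        have hai : a i = w i + c i - ∑ j, c j := by simp [hadef, hii]
        rw [hai]; linarith
      · have hai : a i = w i + c i := by simp [hadef, hii]
        rw [hai]; linarith
    have hasum : ∑ i, a i = 1 := by
      simp only [hadef]
      rw [Finset.sum_sub_distrib, Finset.sum_add_distrib, hw1, Finset.sum_ite_eq' Finset.univ i₀]
      simp
    have hcomb : ∑ i, a i • z i = x := by
      have hx' : ∑ i, c i • z i - (∑ j, c j) • z i₀ = x - t := by
        rw [Finset.sum_smul, ← Finset.sum_sub_distrib]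
        simpa [hu, smul_sub] using hc
      have : ∑ i, a i • z i
          = (∑ i, w i • z i) + ((∑ i, c i • z i) - (∑ i, (if i = i₀ then ∑ j, c j else 0) • z i)) := by
        simp only [hadef, add_smul, sub_smul]
        rw [Finset.sum_sub_distrib, Finset.sum_add_distrib]
        abel
      rw [this]
      have hite : ∑ i, (if i = i₀ then ∑ j, c j else 0) • z i = (∑ j, c j) • z i₀ := by
        rw [Finset.sum_congr rfl (fun i _ => ite_smul _ _ _ _)]
        simp [Finset.sum_ite_eq' Finset.univ i₀]
      rw [hite, hx', ← ht]
      abel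
    have := Finset.centerMass_mem_convexHull (Finset.univ) (fun i _ => ha0 i)
      (by rw [hasum]; exact one_pos) (fun i _ => Set.mem_range_self (f := z) i)
    rwa [Finset.centerMass, hasum, inv_one, one_smul, hcomb] at this
  -- assemble
  rw [mem_intrinsicInterior]
  refine ⟨⟨t, htA⟩, ?_, rfl⟩
  apply mem_interior.2
  refine ⟨{y : affineSpan ℝ C | ‖(y : E) - t‖ < ε}, ?_, ?_, by simpa using hε⟩
  · intro y hy
    exact claim (y : E) y.2 hy
  · have hopen : IsOpen {e : E | ‖e - t‖ < ε} :=
      isOpen_lt ((continuous_id.sub continuous_const).norm) continuous_const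
    exact hopen.preimage continuous_subtype_val

/-- If the likelihood `L` attains its supremum, then the target vector `t` lies in the
relative interior (intrinsic interior) of the convex hull `C` of `z(𝒢_k)`. -/
theorem ergm_max_attained_implies_target_in_rint (k n : ℕ) (hk : 0 < k) (hn : 0 < n)
    (z : SimpleGraph (Fin k) → EuclideanSpace ℝ (Fin n))
    (t : EuclideanSpace ℝ (Fin n))
    (L : EuclideanSpace ℝ (Fin n) → ℝ)
    (hL : L = fun θ => Real.exp
      (⟪θ, t⟫ - Real.log (∑ g : SimpleGraph (Fin k), Real.exp ⟪θ, z g⟫)))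
    (hmax : ∃ θhat : EuclideanSpace ℝ (Fin n), ∀ θ, L θ ≤ L θhat) :
    t ∈ intrinsicInterior ℝ (convexHull ℝ (Set.range z)) := by
  classical
  obtain ⟨θh, hθh⟩ := hmax
  have hℓ : ∀ θ, ⟪θ, t⟫ - Real.log (∑ g : SimpleGraph (Fin k), Real.exp ⟪θ, z g⟫)
      ≤ ⟪θh, t⟫ - Real.log (∑ g : SimpleGraph (Fin k), Real.exp ⟪θh, z g⟫) := by
    intro θ
    have := hθh θ
    rw [hL] at this
    exact Real.exp_le_exp.1 this
  set S0 : ℝ := ∑ g : SimpleGraph (Fin k), Real.exp ⟪θh, z g⟫ with hS0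
  have hS0pos : 0 < S0 :=
    Finset.sum_pos (fun g _ => Real.exp_pos _) ⟨⊥, Finset.mem_univ _⟩
  set w : SimpleGraph (Fin k) → ℝ := fun g => Real.exp ⟪θh, z g⟫ / S0 with hwdef
  have hw : ∀ g, 0 < w g := fun g => div_pos (Real.exp_pos _) hS0pos
  have hw1 : ∑ g, w g = 1 := by
    rw [hwdef, ← Finset.sum_div, ← hS0, div_self (ne_of_gt hS0pos)]
  have hteq : t = ∑ g, w g • z g := by
    apply ext_inner_left ℝ
    intro v
    have key : ⟪v, t⟫ = ∑ g, w g * ⟪v, z g⟫ := by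
      set S : ℝ → ℝ := fun s => ∑ g : SimpleGraph (Fin k),
        Real.exp (⟪θh, z g⟫ + s * ⟪v, z g⟫) with hSdef
      have hS' : HasDerivAt S
          (∑ g : SimpleGraph (Fin k), Real.exp ⟪θh, z g⟫ * ⟪v, z g⟫) 0 := by
        apply HasDerivAt.fun_sum
        intro g _
        have h1 : HasDerivAt (fun s : ℝ => ⟪θh, z g⟫ + s * ⟪v, z g⟫) (⟪v, z g⟫) 0 :=
          (hasDerivAt_mul_const _).const_add _
        simpa using h1.exp
      have hSval : S 0 = S0 := by simp [hSdef, hS0]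
      have hf : HasDerivAt
          (fun s : ℝ => (⟪θh, t⟫ + s * ⟪v, t⟫) - Real.log (S s))
          (⟪v, t⟫ - (∑ g : SimpleGraph (Fin k), Real.exp ⟪θh, z g⟫ * ⟪v, z g⟫) / S0) 0 := by
        have h2 : HasDerivAt (fun s : ℝ => ⟪θh, t⟫ + s * ⟪v, t⟫) (⟪v, t⟫) 0 :=
          (hasDerivAt_mul_const _).const_add _
        have h3 := hS'.log (by rw [hSval]; exact ne_of_gt hS0pos)
        rw [hSval] at h3
        exact h2.sub h3
      have hmax0 : IsLocalMax
          (fun s : ℝ => (⟪θh, t⟫ + s * ⟪v, t⟫) - Real.log (S s)) 0 := by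
        apply Filter.Eventually.of_forall
        intro s
        have h := hℓ (θh + s • v)
        simp only [inner_add_left, real_inner_smul_left] at h
        simpa [hSdef, ← hS0] using h
      have hzero := hmax0.hasDerivAt_eq_zero hf
      have hvt : ⟪v, t⟫ = (∑ g : SimpleGraph (Fin k), Real.exp ⟪θh, z g⟫ * ⟪v, z g⟫) / S0 := by
        linarith [hzero]
      rw [hvt, Finset.sum_div]
      refine Finset.sum_congr rfl fun g _ => ?_
      rw [hwdef]
      ring
    rw [key, inner_sum]
    refine Finset.sum_congr rfl fun g _ => ?_
    rw [real_inner_smul_right]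
  rw [hteq]
  exact posCombo_mem_intrinsicInterior z w hw hw1
end

section
/- Suppose the affine span of z(𝒢_k) is all of ℝⁿ (so the convex hull C of z(𝒢_k) is top-dimensional) and the target t lies in the (topological) interior of C. Then there exists a unique θ̂ ∈ ℝⁿ such that L(θ̂) = sup_{θ ∈ ℝⁿ} L(θ). -/
open scoped RealInnerProductSpace BigOperators

set_option maxHeartbeats 1000000 in
/-- If `C = convexHull(z(𝒢_k))` is top-dimensional and `t ∈ interior C`, then there is a
unique `θhat ∈ ℝⁿ` maximizing the likelihood `L` over `ℝⁿ`. -/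
theorem ergm_interior_implies_unique_MLE (k n : ℕ) (hk : 0 < k) (hn : 0 < n)
    (z : SimpleGraph (Fin k) → EuclideanSpace ℝ (Fin n))
    (t : EuclideanSpace ℝ (Fin n))
    (L : EuclideanSpace ℝ (Fin n) → ℝ)
    (hL : L = fun θ => Real.exp
      (⟪θ, t⟫ - Real.log (∑ g : SimpleGraph (Fin k), Real.exp ⟪θ, z g⟫)))
    (hdim : affineSpan ℝ (Set.range z) = ⊤)
    (ht : t ∈ interior (convexHull ℝ (Set.range z))) :
    ∃! θhat : EuclideanSpace ℝ (Fin n), ∀ θ, L θ ≤ L θhat := by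
  classical
  set A : EuclideanSpace ℝ (Fin n) → ℝ :=
    fun θ => Real.log (∑ g : SimpleGraph (Fin k), Real.exp ⟪θ, z g⟫) with hA
  set f : EuclideanSpace ℝ (Fin n) → ℝ := fun θ => ⟪θ, t⟫ - A θ with hf
  -- reduce to maximizing f
  suffices h : ∃! θhat : EuclideanSpace ℝ (Fin n), ∀ θ, f θ ≤ f θhat by
    obtain ⟨θhat, hmax, huniq⟩ := h
    refine ⟨θhat, fun θ => ?_, fun y hy => huniq y fun θ => ?_⟩
    · rw [hL]
      have h := hmax θ
      simp only [hf, hA] at h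
      exact Real.exp_le_exp.2 h
    · have h := hy θ
      rw [hL] at h
      simpa [hf, hA] using Real.exp_le_exp.1 h
  have hSpos : ∀ θ : EuclideanSpace ℝ (Fin n),
      0 < ∑ g : SimpleGraph (Fin k), Real.exp ⟪θ, z g⟫ := fun θ =>
    Finset.sum_pos (fun g _ => Real.exp_pos _) Finset.univ_nonempty
  have hAge : ∀ (θ : EuclideanSpace ℝ (Fin n)) (g : SimpleGraph (Fin k)),
      ⟪θ, z g⟫ ≤ A θ := by
    intro θ g
    have h1 : Real.exp ⟪θ, z g⟫ ≤ ∑ g : SimpleGraph (Fin k), Real.exp ⟪θ, z g⟫ :=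
      Finset.single_le_sum (f := fun g : SimpleGraph (Fin k) => Real.exp ⟪θ, z g⟫)
        (fun g _ => (Real.exp_pos _).le) (Finset.mem_univ g)
    have h2 := Real.exp_log (hSpos θ)
    rw [← h2] at h1
    exact Real.exp_le_exp.1 h1
  -- coercivity
  obtain ⟨ε, hε, hball⟩ : ∃ ε > 0, Metric.ball t ε ⊆ convexHull ℝ (Set.range z) := by
    rcases Metric.mem_nhds_iff.1 (mem_interior_iff_mem_nhds.1 ht) with ⟨ε, hε, hb⟩
    exact ⟨ε, hε, hb⟩
  have hcoer : ∀ θ : EuclideanSpace ℝ (Fin n), θ ≠ 0 → f θ ≤ -(ε / 2) * ‖θ‖ := by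
    intro θ hθ
    have hnθ : (0 : ℝ) < ‖θ‖ := norm_pos_iff.2 hθ
    set u : EuclideanSpace ℝ (Fin n) := (ε / 2 / ‖θ‖) • θ with hu
    have hmemb : t + u ∈ convexHull ℝ (Set.range z) := by
      apply hball
      simp only [Metric.mem_ball, dist_eq_norm, add_sub_cancel_left, hu, norm_smul]
      rw [Real.norm_eq_abs, abs_of_pos (by positivity)]
      rw [div_mul_cancel₀ _ hnθ.ne']
      linarith
    have hcvx : ConvexOn ℝ (convexHull ℝ (Set.range z))
        (fun x : EuclideanSpace ℝ (Fin n) => ⟪θ, x⟫) :=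
      LinearMap.convexOn (innerSL ℝ θ).toLinearMap (convex_convexHull ℝ _)
    obtain ⟨y, ⟨g, hg⟩, hy⟩ :=
      hcvx.exists_ge_of_mem_convexHull (subset_convexHull ℝ _) hmemb
    have hinner : ⟪θ, t + u⟫ = ⟪θ, t⟫ + (ε / 2) * ‖θ‖ := by
      rw [inner_add_right, hu, real_inner_smul_right, real_inner_self_eq_norm_sq]
      field_simp
    have hAub : ⟪θ, t⟫ + (ε / 2) * ‖θ‖ ≤ A θ := by
      rw [← hinner]
      calc ⟪θ, t + u⟫ ≤ ⟪θ, y⟫ := hy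
        _ = ⟪θ, z g⟫ := by rw [hg]
        _ ≤ A θ := hAge θ g
    simp only [hf]
    linarith
  -- existence via compactness
  set R : ℝ := (2 / ε) * (A 0 + 1) with hR
  have hA0 : 0 ≤ A 0 := by
    apply Real.log_nonneg
    have h0 := Finset.single_le_sum
      (f := fun g : SimpleGraph (Fin k) => Real.exp ⟪(0 : EuclideanSpace ℝ (Fin n)), z g⟫)
      (fun g _ => (Real.exp_pos _).le)
      (Finset.mem_univ (Classical.ofNonempty : SimpleGraph (Fin k)))
    simpa [inner_zero_left] using h0
  have hRpos : 0 < R := by positivity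
  have hcont : Continuous f := by
    apply Continuous.sub
    · exact (continuous_id.inner continuous_const)
    · apply Continuous.log
      · exact continuous_finset_sum _ fun g _ =>
          Real.continuous_exp.comp (continuous_id.inner continuous_const)
      · exact fun x => (hSpos x).ne'
  obtain ⟨θhat, hθhatmem, hθhatmax⟩ :=
    (isCompact_closedBall (0 : EuclideanSpace ℝ (Fin n)) R).exists_isMaxOn
      ⟨0, Metric.mem_closedBall_self hRpos.le⟩ hcont.continuousOn
  have hglobal : ∀ θ, f θ ≤ f θhat := by
    intro θ
    by_cases hmem : θ ∈ Metric.closedBall (0 : EuclideanSpace ℝ (Fin n)) R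
    · exact hθhatmax hmem
    · have hθ0 : θ ≠ 0 := by
        intro h; exact hmem (by simp [h, hRpos.le])
      have hnθ : R < ‖θ‖ := by
        simpa [Metric.mem_closedBall, dist_zero_right, not_le] using hmem
      have h1 : f θ ≤ -(ε / 2) * ‖θ‖ := hcoer θ hθ0
      have h2 : -(ε / 2) * ‖θ‖ < -(ε / 2) * R := by nlinarith
      have h3 : -(ε / 2) * R = -(A 0 + 1) := by
        rw [hR]; field_simp
      have h4 : f 0 ≤ f θhat := hθhatmax (Metric.mem_closedBall_self hRpos.le)
      have h5 : f 0 = -(A 0) := by simp [hf, inner_zero_left]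
      refine le_of_lt ?_
      calc f θ ≤ -(ε / 2) * ‖θ‖ := h1
        _ < -(ε / 2) * R := h2
        _ = -(A 0 + 1) := h3
        _ < -(A 0) := by linarith
        _ = f 0 := h5.symm
        _ ≤ f θhat := h4
  -- uniqueness via strict concavity
  refine ⟨θhat, hglobal, ?_⟩
  intro θ2 hθ2
  by_contra hne
  set θ1 := θhat with hθ1
  have hmax1 : ∀ θ, f θ ≤ f θ1 := hglobal
  have hmax2 : ∀ θ, f θ ≤ f θ2 := hθ2
  have heqf : f θ1 = f θ2 := le_antisymm (hmax2 θ1) (hmax1 θ2)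
  -- Cauchy-Schwarz in EuclideanSpace ℝ (SimpleGraph (Fin k))
  set x : EuclideanSpace ℝ (SimpleGraph (Fin k)) :=
    WithLp.toLp 2 (fun g => Real.exp (⟪θ1, z g⟫ / 2)) with hx
  set y : EuclideanSpace ℝ (SimpleGraph (Fin k)) :=
    WithLp.toLp 2 (fun g => Real.exp (⟪θ2, z g⟫ / 2)) with hy
  set m : EuclideanSpace ℝ (Fin n) := (2 : ℝ)⁻¹ • (θ1 + θ2) with hm
  have hinm : ∀ g : SimpleGraph (Fin k), ⟪m, z g⟫ = (⟪θ1, z g⟫ + ⟪θ2, z g⟫) / 2 := by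
    intro g
    rw [hm, real_inner_smul_left, inner_add_left]
    ring
  have hxy : ⟪x, y⟫ = ∑ g : SimpleGraph (Fin k), Real.exp ⟪m, z g⟫ := by
    rw [PiLp.inner_apply]
    apply Finset.sum_congr rfl
    intro g _
    simp only [RCLike.inner_apply, conj_trivial, hx, hy, PiLp.toLp_apply, hinm g, ← Real.exp_add]
    congr 1
    ring
  have hxsq : ‖x‖ ^ 2 = ∑ g : SimpleGraph (Fin k), Real.exp ⟪θ1, z g⟫ := by
    rw [EuclideanSpace.norm_eq, Real.sq_sqrt (by positivity)]
    apply Finset.sum_congr rfl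
    intro g _
    have hnorm : ‖x g‖ = Real.exp (⟪θ1, z g⟫ / 2) := by
      simp only [hx, PiLp.toLp_apply, Real.norm_eq_abs]
      exact abs_of_pos (Real.exp_pos _)
    rw [hnorm, sq, ← Real.exp_add]
    congr 1
    ring
  have hysq : ‖y‖ ^ 2 = ∑ g : SimpleGraph (Fin k), Real.exp ⟪θ2, z g⟫ := by
    rw [EuclideanSpace.norm_eq, Real.sq_sqrt (by positivity)]
    apply Finset.sum_congr rfl
    intro g _
    have hnorm : ‖y g‖ = Real.exp (⟪θ2, z g⟫ / 2) := by
      simp only [hy, PiLp.toLp_apply, Real.norm_eq_abs]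
      exact abs_of_pos (Real.exp_pos _)
    rw [hnorm, sq, ← Real.exp_add]
    congr 1
    ring
  have hxpos : 0 < ‖x‖ := by
    have hx0 : x ≠ 0 := by
      intro h
      have h2 := congrArg (fun v : EuclideanSpace ℝ (SimpleGraph (Fin k)) => v (Classical.ofNonempty : SimpleGraph (Fin k))) h
      simp only [hx, PiLp.toLp_apply, PiLp.zero_apply] at h2
      exact (Real.exp_pos _).ne' h2
    exact norm_pos_iff.2 hx0
  have hypos : 0 < ‖y‖ := by
    have hy0 : y ≠ 0 := by
      intro h
      have h2 := congrArg (fun v : EuclideanSpace ℝ (SimpleGraph (Fin k)) => v (Classical.ofNonempty : SimpleGraph (Fin k))) h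
      simp only [hy, PiLp.toLp_apply, PiLp.zero_apply] at h2
      exact (Real.exp_pos _).ne' h2
    exact norm_pos_iff.2 hy0
  have hAm : A m = Real.log ⟪x, y⟫ := by
    simp only [hA]
    rw [hxy]
  have hA1 : A θ1 = 2 * Real.log ‖x‖ := by
    simp only [hA]
    rw [← hxsq, Real.log_pow]
    norm_num
  have hA2 : A θ2 = 2 * Real.log ‖y‖ := by
    simp only [hA]
    rw [← hysq, Real.log_pow]
    norm_num
  have hcs : ⟪x, y⟫ ≤ ‖x‖ * ‖y‖ := real_inner_le_norm x y
  rcases lt_or_eq_of_le hcs with hlt | heq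
  · -- strict case: f m > f θ1, contradiction
    have hxylog : Real.log ⟪x, y⟫ < Real.log (‖x‖ * ‖y‖) := by
      apply Real.log_lt_log _ hlt
      rw [hxy]; exact hSpos m
    have hAmlt : A m < (A θ1 + A θ2) / 2 := by
      rw [Real.log_mul hxpos.ne' hypos.ne'] at hxylog
      rw [hAm, hA1, hA2]
      linarith
    have hmt : ⟪m, t⟫ = (⟪θ1, t⟫ + ⟪θ2, t⟫) / 2 := by
      rw [hm, real_inner_smul_left, inner_add_left]; ring
    have hlt2 : f θ1 < f m := by
      simp only [hf] at heqf ⊢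
      rw [hmt]
      linarith
    exact absurd (hmax1 m) (not_le.2 hlt2)
  · -- equality case: inner with θ1 - θ2 is constant on range z
    have heq2 : ‖y‖ • x = ‖x‖ • y := inner_eq_norm_mul_iff_real.1 heq
    set c : ℝ := 2 * (Real.log ‖x‖ - Real.log ‖y‖) with hc
    have hconst : ∀ g : SimpleGraph (Fin k), ⟪θ1 - θ2, z g⟫ = c := by
      intro g
      have h1 : ‖y‖ * x g = ‖x‖ * y g := congrArg (fun v : EuclideanSpace ℝ (SimpleGraph (Fin k)) => v g) heq2
      have h2 : Real.log ‖y‖ + ⟪θ1, z g⟫ / 2 = Real.log ‖x‖ + ⟪θ2, z g⟫ / 2 := by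
        have h3 := congrArg Real.log h1
        rwa [Real.log_mul hypos.ne' (by simp only [hx, PiLp.toLp_apply]; positivity),
          Real.log_mul hxpos.ne' (by simp only [hy, PiLp.toLp_apply]; positivity), hx, hy, PiLp.toLp_apply, PiLp.toLp_apply,
          Real.log_exp, Real.log_exp] at h3
      rw [inner_sub_left, hc]
      linarith
    -- affine subspace {v | ⟪θ1-θ2, v⟫ = c} contains affineSpan = ⊤
    set d : EuclideanSpace ℝ (Fin n) := θ1 - θ2 with hd
    set S : AffineSubspace ℝ (EuclideanSpace ℝ (Fin n)) :=
      { carrier := {v : EuclideanSpace ℝ (Fin n) | ⟪d, v⟫ = c}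
        smul_vsub_vadd_mem' := by
          intro r p1 p2 p3 h1 h2 h3
          simp only [Set.mem_setOf_eq] at *
          have hv : r • (p1 -ᵥ p2) +ᵥ p3 = r • (p1 - p2) + p3 := rfl
          rw [hv, inner_add_right, real_inner_smul_right, inner_sub_right, h1, h2, h3]
          ring } with hS
    have hle : affineSpan ℝ (Set.range z) ≤ S := by
      rw [affineSpan_le]
      rintro v ⟨g, rfl⟩
      exact hconst g
    rw [hdim] at hle
    have hall : ∀ v : EuclideanSpace ℝ (Fin n), ⟪d, v⟫ = c := fun v =>
      hle (AffineSubspace.mem_top ℝ (EuclideanSpace ℝ (Fin n)) v)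
    have h0 : c = 0 := by rw [← hall 0, inner_zero_right]
    have hdd : ⟪d, d⟫ = 0 := by rw [hall d, h0]
    have hd0 : d = 0 := by
      rwa [real_inner_self_eq_norm_sq, pow_eq_zero_iff (by norm_num), norm_eq_zero] at hdd
    apply hne
    rw [hd, sub_eq_zero] at hd0
    exact hd0.symm
end

section
/- Let V = span{z(g₁) − z(g₂) : g₁, g₂ ∈ 𝒢_k}. If the target t lies in the relative interior (intrinsic interior) of the convex hull C of z(𝒢_k), then there exists a unique θ̂ ∈ V such that L(θ̂) = sup_{θ ∈ ℝⁿ} L(θ) (the supremum over all of ℝⁿ is attained at θ̂, and θ̂ is the unique such point lying in V). -/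
open scoped RealInnerProductSpace BigOperators

noncomputable section ErgmAux

variable {n : ℕ} {G : Type*} [Fintype G] [Nonempty G]

/-- the log-likelihood -/
def ergmEll (z : G → EuclideanSpace ℝ (Fin n)) (t : EuclideanSpace ℝ (Fin n))
    (θ : EuclideanSpace ℝ (Fin n)) : ℝ :=
  ⟪θ, t⟫ - Real.log (∑ g : G, Real.exp ⟪θ, z g⟫)

lemma ergm_sum_pos (z : G → EuclideanSpace ℝ (Fin n)) (θ : EuclideanSpace ℝ (Fin n)) :
    0 < ∑ g : G, Real.exp ⟪θ, z g⟫ :=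
  Finset.sum_pos (fun g _ => Real.exp_pos _) Finset.univ_nonempty

lemma ergmEll_continuous (z : G → EuclideanSpace ℝ (Fin n)) (t : EuclideanSpace ℝ (Fin n)) :
    Continuous (ergmEll z t) := by
  unfold ergmEll
  have h1 : Continuous fun θ : EuclideanSpace ℝ (Fin n) => ⟪θ, t⟫ :=
    continuous_id.inner continuous_const
  have h2 : Continuous fun θ : EuclideanSpace ℝ (Fin n) =>
      ∑ g : G, Real.exp ⟪θ, z g⟫ := by
    refine continuous_finset_sum _ fun g _ => ?_
    exact (continuous_id.inner continuous_const).rexp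
  exact h1.sub (h2.log fun θ => (ergm_sum_pos z θ).ne')

lemma ergmEll_le (z : G → EuclideanSpace ℝ (Fin n)) (t : EuclideanSpace ℝ (Fin n))
    (θ : EuclideanSpace ℝ (Fin n)) (g : G) :
    ergmEll z t θ ≤ ⟪θ, t⟫ - ⟪θ, z g⟫ := by
  unfold ergmEll
  have h1 : Real.exp ⟪θ, z g⟫ ≤ ∑ g' : G, Real.exp ⟪θ, z g'⟫ :=
    Finset.single_le_sum (f := fun g' : G => Real.exp ⟪θ, z g'⟫) (fun g' _ => (Real.exp_pos _).le) (Finset.mem_univ g)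
  have h2 : ⟪θ, z g⟫ ≤ Real.log (∑ g' : G, Real.exp ⟪θ, z g'⟫) := by
    rw [← Real.log_exp ⟪θ, z g⟫]
    exact Real.log_le_log (Real.exp_pos _) h1
  linarith

/-- inner products with vectors orthogonal to the vector span are constant on the range,
and equal to the inner product with anything in the convex hull. -/
lemma ergm_inner_const (z : G → EuclideanSpace ℝ (Fin n)) {w : EuclideanSpace ℝ (Fin n)}
    (hw : w ∈ (vectorSpan ℝ (Set.range z))ᗮ) {x : EuclideanSpace ℝ (Fin n)}
    (hx : x ∈ convexHull ℝ (Set.range z)) (g : G) : ⟪w, x⟫ = ⟪w, z g⟫ := by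
  have hconst : ∀ g' : G, ⟪w, z g'⟫ = ⟪w, z g⟫ := by
    intro g'
    have hmem : z g' -ᵥ z g ∈ vectorSpan ℝ (Set.range z) :=
      vsub_mem_vectorSpan ℝ (Set.mem_range_self g') (Set.mem_range_self g)
    have h0 : ⟪w, z g' -ᵥ z g⟫ = 0 := by
      have := (Submodule.mem_orthogonal _ w).1 hw _ hmem
      rwa [real_inner_comm] at this
    simp only [vsub_eq_sub, inner_sub_right] at h0
    linarith
  -- the hyperplane is convex and contains the range
  have hsub : convexHull ℝ (Set.range z) ⊆ {x | ⟪w, x⟫ = ⟪w, z g⟫} := by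
    refine convexHull_min ?_ ?_
    · rintro _ ⟨g', rfl⟩; exact hconst g'
    · exact convex_hyperplane (innerₗ (EuclideanSpace ℝ (Fin n)) w).isLinear _
  exact hsub hx

lemma ergmEll_add_perp (z : G → EuclideanSpace ℝ (Fin n)) {t : EuclideanSpace ℝ (Fin n)}
    (htC : t ∈ convexHull ℝ (Set.range z)) (θ : EuclideanSpace ℝ (Fin n))
    {w : EuclideanSpace ℝ (Fin n)} (hw : w ∈ (vectorSpan ℝ (Set.range z))ᗮ) :
    ergmEll z t (θ + w) = ergmEll z t θ := by
  obtain ⟨g₀⟩ := ‹Nonempty G›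
  set c : ℝ := ⟪w, z g₀⟫ with hc
  have hzc : ∀ g : G, ⟪w, z g⟫ = c := fun g => by
    rw [hc, ← ergm_inner_const z hw (subset_convexHull ℝ _ (Set.mem_range_self g)) g,
      ergm_inner_const z hw (subset_convexHull ℝ _ (Set.mem_range_self g)) g₀]
  have htc : ⟪w, t⟫ = c := ergm_inner_const z hw htC g₀
  unfold ergmEll
  have hsum : ∑ g : G, Real.exp ⟪θ + w, z g⟫
      = (∑ g : G, Real.exp ⟪θ, z g⟫) * Real.exp c := by
    rw [Finset.sum_mul]
    refine Finset.sum_congr rfl fun g _ => ?_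
    rw [inner_add_left, hzc g, Real.exp_add]
  rw [hsum, Real.log_mul (ergm_sum_pos z θ).ne' (Real.exp_pos _).ne', Real.log_exp,
    inner_add_left, htc]
  ring

lemma ergm_relint_radius (z : G → EuclideanSpace ℝ (Fin n)) {t : EuclideanSpace ℝ (Fin n)}
    (ht : t ∈ intrinsicInterior ℝ (convexHull ℝ (Set.range z))) :
    ∃ r : ℝ, 0 < r ∧ ∀ u : EuclideanSpace ℝ (Fin n), u ∈ vectorSpan ℝ (Set.range z) →
      ‖u‖ = 1 → t + r • u ∈ convexHull ℝ (Set.range z) := by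
  set C := convexHull ℝ (Set.range z) with hC
  obtain ⟨y, hy, hyt⟩ := mem_intrinsicInterior.1 ht
  obtain ⟨δ, hδpos, hδ⟩ := Metric.mem_nhds_iff.1 (mem_interior_iff_mem_nhds.1 hy)
  refine ⟨δ / 2, by linarith, fun u hu hu1 => ?_⟩
  have hspan : affineSpan ℝ C = affineSpan ℝ (Set.range z) := affineSpan_convexHull _
  have hu' : u ∈ (affineSpan ℝ C).direction := by
    rw [hspan, direction_affineSpan]; exact hu
  have hxmem : (δ / 2) • u + t ∈ affineSpan ℝ C := by
    have hty : t ∈ affineSpan ℝ C := hyt ▸ y.2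
    exact AffineSubspace.vadd_mem_of_mem_direction
      (Submodule.smul_mem _ _ hu') hty
  have hball : (⟨(δ / 2) • u + t, hxmem⟩ : affineSpan ℝ C) ∈ Metric.ball y δ := by
    rw [Metric.mem_ball, Subtype.dist_eq]
    simp only [hyt]
    rw [dist_eq_norm]
    simp only [add_sub_cancel_right]
    rw [norm_smul, hu1]
    simp only [mul_one, Real.norm_eq_abs]
    rw [abs_of_pos (by linarith)]
    linarith
  have := hδ hball
  simpa [add_comm] using this

lemma ergm_coercive (z : G → EuclideanSpace ℝ (Fin n)) {t : EuclideanSpace ℝ (Fin n)}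
    (ht : t ∈ intrinsicInterior ℝ (convexHull ℝ (Set.range z))) :
    ∃ ε : ℝ, 0 < ε ∧ ∀ θ : EuclideanSpace ℝ (Fin n), θ ∈ vectorSpan ℝ (Set.range z) →
      ergmEll z t θ ≤ -(ε * ‖θ‖) := by
  obtain ⟨r, hr, hrC⟩ := ergm_relint_radius z ht
  refine ⟨r, hr, fun θ hθ => ?_⟩
  rcases eq_or_ne θ 0 with rfl | hθ0
  · simp only [norm_zero, mul_zero, neg_zero]
    unfold ergmEll
    have h1 : (1 : ℝ) ≤ ∑ g : G, Real.exp ⟪(0 : EuclideanSpace ℝ (Fin n)), z g⟫ := by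
      have : ∀ g : G, Real.exp ⟪(0 : EuclideanSpace ℝ (Fin n)), z g⟫ = 1 := fun g => by
        rw [inner_zero_left, Real.exp_zero]
      rw [Finset.sum_congr rfl fun g _ => this g]
      simp only [Finset.sum_const, nsmul_eq_mul, mul_one]
      exact_mod_cast Fintype.card_pos
    have h2 := Real.log_nonneg h1
    have h3 : ⟪(0 : EuclideanSpace ℝ (Fin n)), t⟫ = 0 := inner_zero_left t
    linarith
  · set u : EuclideanSpace ℝ (Fin n) := ‖θ‖⁻¹ • θ with hu
    have hθn : (0 : ℝ) < ‖θ‖ := norm_pos_iff.2 hθ0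
    have hu1 : ‖u‖ = 1 := norm_smul_inv_norm hθ0
    have huV : u ∈ vectorSpan ℝ (Set.range z) := Submodule.smul_mem _ _ hθ
    have hxC := hrC u huV hu1
    -- the convex hull lies in the halfspace below the max of ⟪u, z g⟫
    have hne : (Finset.univ : Finset G).Nonempty := Finset.univ_nonempty
    set M : ℝ := Finset.univ.sup' hne (fun g => ⟪u, z g⟫) with hM
    have hhalf : convexHull ℝ (Set.range z) ⊆ {x | ⟪u, x⟫ ≤ M} := by
      refine convexHull_min ?_ (convex_halfSpace_le
        (innerₗ (EuclideanSpace ℝ (Fin n)) u).isLinear M)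
      rintro _ ⟨g, rfl⟩
      exact Finset.le_sup' (fun g => ⟪u, z g⟫) (Finset.mem_univ g)
    obtain ⟨g, -, hg⟩ := Finset.exists_mem_eq_sup' hne (fun g => ⟪u, z g⟫)
    have hx : ⟪u, t + r • u⟫ ≤ ⟪u, z g⟫ := by
      have := hhalf hxC
      rwa [Set.mem_setOf_eq, hM, hg] at this
    have hinner : ⟪u, t + r • u⟫ = ⟪u, t⟫ + r := by
      rw [inner_add_right, real_inner_smul_right, real_inner_self_eq_norm_sq, hu1]
      ring
    -- so ⟪u, t⟫ - ⟪u, z g⟫ ≤ -r ; scale by ‖θ‖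
    have hscale : θ = ‖θ‖ • u := by
      rw [hu, smul_smul, mul_inv_cancel₀ hθn.ne', one_smul]
    have hle := ergmEll_le z t θ g
    have h1 : ⟪θ, t⟫ = ‖θ‖ * ⟪u, t⟫ := by
      conv_lhs => rw [hscale]
      exact real_inner_smul_left _ _ _
    have h2 : ⟪θ, z g⟫ = ‖θ‖ * ⟪u, z g⟫ := by
      conv_lhs => rw [hscale]
      exact real_inner_smul_left _ _ _
    rw [h1, h2] at hle
    have hd : ⟪u, t⟫ - ⟪u, z g⟫ ≤ -r := by linarith
    calc ergmEll z t θ ≤ ‖θ‖ * ⟪u, t⟫ - ‖θ‖ * ⟪u, z g⟫ := hle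
      _ = ‖θ‖ * (⟪u, t⟫ - ⟪u, z g⟫) := by ring
      _ ≤ ‖θ‖ * (-r) := by
          exact mul_le_mul_of_nonneg_left hd hθn.le
      _ = -(r * ‖θ‖) := by ring

lemma ergm_exists_max (z : G → EuclideanSpace ℝ (Fin n)) {t : EuclideanSpace ℝ (Fin n)}
    (ht : t ∈ intrinsicInterior ℝ (convexHull ℝ (Set.range z))) :
    ∃ θhat : EuclideanSpace ℝ (Fin n), θhat ∈ vectorSpan ℝ (Set.range z) ∧
      ∀ θ : EuclideanSpace ℝ (Fin n), ergmEll z t θ ≤ ergmEll z t θhat := by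
  obtain ⟨ε, hε, hcoer⟩ := ergm_coercive z ht
  set V := vectorSpan ℝ (Set.range z) with hV
  set ℓ := ergmEll z t with hℓ
  set K : Set (EuclideanSpace ℝ (Fin n)) := {θ | θ ∈ V ∧ ℓ 0 ≤ ℓ θ} with hK
  have h0K : (0 : EuclideanSpace ℝ (Fin n)) ∈ K := ⟨zero_mem V, le_refl _⟩
  have hKcl : IsClosed K := by
    have h1 : IsClosed (V : Set (EuclideanSpace ℝ (Fin n))) :=
      Submodule.closed_of_finiteDimensional V
    have h2 : IsClosed (ℓ ⁻¹' Set.Ici (ℓ 0)) :=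
      isClosed_Ici.preimage (ergmEll_continuous z t)
    exact h1.inter h2
  have hKbd : Bornology.IsBounded K := by
    refine (Metric.isBounded_iff_subset_closedBall 0).2 ⟨(-(ℓ 0)) / ε, fun θ hθ => ?_⟩
    obtain ⟨hθV, hθℓ⟩ := hθ
    have h1 := hcoer θ hθV
    have h2 : ε * ‖θ‖ ≤ -(ℓ 0) := by linarith
    rw [Metric.mem_closedBall, dist_zero_right]
    rw [le_div_iff₀ hε, mul_comm]
    exact h2
  have hKcp : IsCompact K := Metric.isCompact_of_isClosed_isBounded hKcl hKbd
  obtain ⟨θhat, hθhatK, hmax⟩ := hKcp.exists_isMaxOn ⟨0, h0K⟩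
    (ergmEll_continuous z t).continuousOn
  refine ⟨θhat, hθhatK.1, fun θ => ?_⟩
  -- first, the max over V
  have hmaxV : ∀ θ' ∈ V, ℓ θ' ≤ ℓ θhat := by
    intro θ' hθ'
    by_cases h : ℓ 0 ≤ ℓ θ'
    · exact hmax ⟨hθ', h⟩
    · exact le_trans (le_of_not_ge h) (hmax h0K)
  -- decompose θ into a part in V and a part orthogonal to V
  set p : EuclideanSpace ℝ (Fin n) := (V.orthogonalProjectionOnto θ : EuclideanSpace ℝ (Fin n))
    with hp
  have hw : θ - p ∈ Vᗮ := V.sub_starProjection_mem_orthogonal θ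
  have hθeq : θ = p + (θ - p) := by abel
  have htC : t ∈ convexHull ℝ (Set.range z) := intrinsicInterior_subset ht
  have hinv : ℓ θ = ℓ p := by
    conv_lhs => rw [hθeq]
    exact ergmEll_add_perp z htC p hw
  rw [hinv]
  exact hmaxV p (V.orthogonalProjectionOnto θ).2

lemma ergm_strict_mid (z : G → EuclideanSpace ℝ (Fin n)) (t : EuclideanSpace ℝ (Fin n))
    {θ₁ θ₂ : EuclideanSpace ℝ (Fin n)} (h₁ : θ₁ ∈ vectorSpan ℝ (Set.range z))
    (h₂ : θ₂ ∈ vectorSpan ℝ (Set.range z)) (hne : θ₁ ≠ θ₂) :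
    (ergmEll z t θ₁ + ergmEll z t θ₂) / 2 < ergmEll z t ((1/2 : ℝ) • (θ₁ + θ₂)) := by
  classical
  set m : EuclideanSpace ℝ (Fin n) := (1/2 : ℝ) • (θ₁ + θ₂) with hm
  set x : EuclideanSpace ℝ G := WithLp.toLp 2 fun g => Real.exp (⟪θ₁, z g⟫ / 2) with hx
  set y : EuclideanSpace ℝ G := WithLp.toLp 2 fun g => Real.exp (⟪θ₂, z g⟫ / 2) with hy
  have hxg : ∀ g : G, x g = Real.exp (⟪θ₁, z g⟫ / 2) := fun _ => rfl
  have hyg : ∀ g : G, y g = Real.exp (⟪θ₂, z g⟫ / 2) := fun _ => rfl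
  have hmg : ∀ g : G, ⟪m, z g⟫ = (⟪θ₁, z g⟫ + ⟪θ₂, z g⟫) / 2 := fun g => by
    rw [hm, real_inner_smul_left, inner_add_left]; ring
  have hmt : ⟪m, t⟫ = (⟪θ₁, t⟫ + ⟪θ₂, t⟫) / 2 := by
    rw [hm, real_inner_smul_left, inner_add_left]; ring
  have hxy : ⟪x, y⟫ = ∑ g : G, Real.exp ⟪m, z g⟫ := by
    rw [PiLp.inner_apply]
    refine Finset.sum_congr rfl fun g _ => ?_
    simp only [RCLike.inner_apply, starRingEnd_apply, star_trivial]
    rw [hxg g, hyg g, ← Real.exp_add, hmg g]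
    ring_nf
  have hx2 : ‖x‖ ^ 2 = ∑ g : G, Real.exp ⟪θ₁, z g⟫ := by
    rw [← real_inner_self_eq_norm_sq, PiLp.inner_apply]
    refine Finset.sum_congr rfl fun g _ => ?_
    simp only [RCLike.inner_apply, starRingEnd_apply, star_trivial]
    rw [hxg g, ← Real.exp_add]
    ring_nf
  have hy2 : ‖y‖ ^ 2 = ∑ g : G, Real.exp ⟪θ₂, z g⟫ := by
    rw [← real_inner_self_eq_norm_sq, PiLp.inner_apply]
    refine Finset.sum_congr rfl fun g _ => ?_
    simp only [RCLike.inner_apply, starRingEnd_apply, star_trivial]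
    rw [hyg g, ← Real.exp_add]
    ring_nf
  have hx2pos : (0 : ℝ) < ‖x‖ ^ 2 := by
    rw [hx2]; exact ergm_sum_pos z θ₁
  have hy2pos : (0 : ℝ) < ‖y‖ ^ 2 := by
    rw [hy2]; exact ergm_sum_pos z θ₂
  have hxpos : (0 : ℝ) < ‖x‖ := by
    rcases (norm_nonneg x).lt_or_eq with h | h
    · exact h
    · exfalso; rw [← h] at hx2pos; simp at hx2pos
  have hypos : (0 : ℝ) < ‖y‖ := by
    rcases (norm_nonneg y).lt_or_eq with h | h
    · exact h
    · exfalso; rw [← h] at hy2pos; simp at hy2pos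
  -- x and y are not parallel, else θ₁ - θ₂ would be orthogonal to the vector span
  have hpar : ‖y‖ • x ≠ ‖x‖ • y := by
    intro heq
    have hg : ∀ g : G, ‖y‖ * x g = ‖x‖ * y g := by
      intro g
      have := congrArg (fun v : EuclideanSpace ℝ G => v g) heq
      simpa using this
    have hconst : ∀ g g' : G,
        ⟪θ₁, z g⟫ - ⟪θ₂, z g⟫ = ⟪θ₁, z g'⟫ - ⟪θ₂, z g'⟫ := by
      intro g g'
      have h1 := hg g
      have h2 := hg g'
      have e1 : ‖y‖ * (x g * y g') = ‖y‖ * (x g' * y g) := by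
        calc ‖y‖ * (x g * y g') = (‖y‖ * x g) * y g' := by ring
          _ = (‖x‖ * y g) * y g' := by rw [h1]
          _ = (‖x‖ * y g') * y g := by ring
          _ = (‖y‖ * x g') * y g := by rw [← h2]
          _ = ‖y‖ * (x g' * y g) := by ring
      have e2 : x g * y g' = x g' * y g := mul_left_cancel₀ hypos.ne' e1
      rw [hxg g, hyg g', hxg g', hyg g, ← Real.exp_add, ← Real.exp_add] at e2
      have e3 := Real.exp_eq_exp.1 e2
      linarith
    set d : EuclideanSpace ℝ (Fin n) := θ₁ - θ₂ with hd
    have hker : vectorSpan ℝ (Set.range z) ≤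
        LinearMap.ker (innerₗ (EuclideanSpace ℝ (Fin n)) d) := by
      rw [vectorSpan_def]
      refine Submodule.span_le.2 ?_
      rintro v hv
      rw [Set.mem_vsub] at hv
      obtain ⟨a, ⟨g, rfl⟩, b, ⟨g', rfl⟩, rfl⟩ := hv
      rw [SetLike.mem_coe, LinearMap.mem_ker]
      have : ⟪d, z g -ᵥ z g'⟫ = 0 := by
        rw [hd, vsub_eq_sub, inner_sub_left, inner_sub_right, inner_sub_right]
        have := hconst g g'
        linarith
      exact this
    have hdV : d ∈ vectorSpan ℝ (Set.range z) := Submodule.sub_mem _ h₁ h₂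
    have hd0 : ⟪d, d⟫ = (0 : ℝ) := hker hdV
    have : d = 0 := inner_self_eq_zero.1 hd0
    exact hne (sub_eq_zero.1 this)
  have hlt : ⟪x, y⟫ < ‖x‖ * ‖y‖ := inner_lt_norm_mul_iff_real.2 hpar
  -- conclude using strict monotonicity of log
  have hmpos : (0 : ℝ) < ∑ g : G, Real.exp ⟪m, z g⟫ := ergm_sum_pos z m
  have hlog : Real.log (∑ g : G, Real.exp ⟪m, z g⟫) <
      (Real.log (∑ g : G, Real.exp ⟪θ₁, z g⟫) +
        Real.log (∑ g : G, Real.exp ⟪θ₂, z g⟫)) / 2 := by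
    have h1 : Real.log (∑ g : G, Real.exp ⟪m, z g⟫) < Real.log (‖x‖ * ‖y‖) := by
      rw [← hxy]
      exact Real.log_lt_log (hxy ▸ hmpos) hlt
    have h2 : Real.log (‖x‖ * ‖y‖) = Real.log ‖x‖ + Real.log ‖y‖ :=
      Real.log_mul hxpos.ne' hypos.ne'
    have h3 : Real.log (∑ g : G, Real.exp ⟪θ₁, z g⟫) = 2 * Real.log ‖x‖ := by
      rw [← hx2, Real.log_pow]; push_cast; ring
    have h4 : Real.log (∑ g : G, Real.exp ⟪θ₂, z g⟫) = 2 * Real.log ‖y‖ := by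
      rw [← hy2, Real.log_pow]; push_cast; ring
    rw [h3, h4]
    linarith
  unfold ergmEll
  rw [hmt]
  linarith

end ErgmAux

/-- With `V = vectorSpan ℝ (z(𝒢_k))`: if `t` lies in the relative interior of
`C = convexHull(z(𝒢_k))`, then there is a unique `θhat ∈ V` at which the likelihood `L`
attains its supremum over all of `ℝⁿ`. -/
theorem ergm_rint_implies_unique_MLE_in_V (k n : ℕ) (hk : 0 < k) (hn : 0 < n)
    (z : SimpleGraph (Fin k) → EuclideanSpace ℝ (Fin n))
    (t : EuclideanSpace ℝ (Fin n))
    (L : EuclideanSpace ℝ (Fin n) → ℝ)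
    (hL : L = fun θ => Real.exp
      (⟪θ, t⟫ - Real.log (∑ g : SimpleGraph (Fin k), Real.exp ⟪θ, z g⟫)))
    (ht : t ∈ intrinsicInterior ℝ (convexHull ℝ (Set.range z))) :
    ∃! θhat : EuclideanSpace ℝ (Fin n),
      θhat ∈ vectorSpan ℝ (Set.range z) ∧ ∀ θ, L θ ≤ L θhat := by
  classical
  haveI : Nonempty (SimpleGraph (Fin k)) := ⟨⊥⟩
  have hLdef : ∀ θ, L θ = Real.exp (ergmEll z t θ) := fun θ => by rw [hL]; rfl
  have hLe : ∀ θ θ' : EuclideanSpace ℝ (Fin n),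
      (L θ ≤ L θ' ↔ ergmEll z t θ ≤ ergmEll z t θ') := fun θ θ' => by
    rw [hLdef, hLdef]; exact Real.exp_le_exp
  obtain ⟨θhat, hVmem, hmax⟩ := ergm_exists_max z ht
  refine ⟨θhat, ⟨hVmem, fun θ => (hLe θ θhat).2 (hmax θ)⟩, ?_⟩
  rintro θ' ⟨hV', hmax'⟩
  by_contra hne
  have h1 : ergmEll z t θ' = ergmEll z t θhat :=
    le_antisymm (hmax θ') ((hLe θhat θ').1 (hmax' θhat))
  have h2 := ergm_strict_mid z t hV' hVmem hne
  have h3 := hmax ((1/2 : ℝ) • (θ' + θhat))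
  rw [h1] at h2
  linarith
end

section
/- Let V = span{z(g₁) − z(g₂) : g₁, g₂ ∈ 𝒢_k}. There exists θ̂ ∈ V with L(θ̂) = sup_{θ ∈ ℝⁿ} L(θ) if and only if the target t lies in the relative interior (intrinsic interior) of the convex hull C of z(𝒢_k). -/
open scoped RealInnerProductSpace BigOperators
open scoped RealInnerProductSpace BigOperators

section Aux
variable {E : Type*} [NormedAddCommGroup E] [InnerProductSpace ℝ E]
variable {ι : Type*} [Fintype ι] [Nonempty ι]

noncomputable def ergmLL (z : ι → E) (t : E) (θ : E) : ℝ :=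
  ⟪θ, t⟫ - Real.log (∑ i, Real.exp ⟪θ, z i⟫)

lemma ergm_sum_exp_pos (z : ι → E) (θ : E) : 0 < ∑ i, Real.exp ⟪θ, z i⟫ :=
  Finset.sum_pos (fun i _ => Real.exp_pos _) Finset.univ_nonempty

lemma ergmLL_le (z : ι → E) (t θ : E) (i : ι) : ergmLL z t θ ≤ ⟪θ, t - z i⟫ := by
  have h1 : Real.exp ⟪θ, z i⟫ ≤ ∑ j, Real.exp ⟪θ, z j⟫ :=
    Finset.single_le_sum (f := fun j => Real.exp ⟪θ, z j⟫) (fun j _ => (Real.exp_pos _).le) (Finset.mem_univ i)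
  have h2 : ⟪θ, z i⟫ ≤ Real.log (∑ j, Real.exp ⟪θ, z j⟫) := by
    calc ⟪θ, z i⟫ = Real.log (Real.exp ⟪θ, z i⟫) := (Real.log_exp _).symm
    _ ≤ _ := Real.log_le_log (Real.exp_pos _) h1
  rw [inner_sub_right]
  unfold ergmLL; linarith

lemma ergmLL_continuous (z : ι → E) (t : E) : Continuous (ergmLL z t) := by
  have h1 : ∀ w : E, Continuous fun θ : E => (⟪θ, w⟫ : ℝ) := fun w =>
    continuous_id.inner continuous_const
  exact (h1 t).sub (Continuous.log
    (continuous_finset_sum _ fun i _ => (h1 (z i)).rexp)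
    (fun θ => (ergm_sum_exp_pos z θ).ne'))

lemma ergmLL_lt_add (z : ι → E) (t θ u : E) (hle : ∀ i, ⟪u, z i⟫ ≤ ⟪u, t⟫)
    (i₀ : ι) (hlt : ⟪u, z i₀⟫ < ⟪u, t⟫) : ergmLL z t θ < ergmLL z t (θ + u) := by
  have key : ∑ i, Real.exp ⟪θ + u, z i⟫ < Real.exp ⟪u, t⟫ * ∑ i, Real.exp ⟪θ, z i⟫ := by
    rw [Finset.mul_sum]
    refine Finset.sum_lt_sum (fun i _ => ?_) ⟨i₀, Finset.mem_univ _, ?_⟩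
    · rw [inner_add_left, ← Real.exp_add]
      exact Real.exp_le_exp.2 (by linarith [hle i])
    · rw [inner_add_left, ← Real.exp_add]
      exact Real.exp_lt_exp.2 (by linarith)
  have hlog : Real.log (∑ i, Real.exp ⟪θ + u, z i⟫) <
      ⟪u, t⟫ + Real.log (∑ i, Real.exp ⟪θ, z i⟫) := by
    calc Real.log (∑ i, Real.exp ⟪θ + u, z i⟫)
        < Real.log (Real.exp ⟪u, t⟫ * ∑ i, Real.exp ⟪θ, z i⟫) :=
          Real.log_lt_log (ergm_sum_exp_pos z _) key
      _ = ⟪u, t⟫ + Real.log (∑ i, Real.exp ⟪θ, z i⟫) := by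
          rw [Real.log_mul (Real.exp_ne_zero _) (ergm_sum_exp_pos z θ).ne', Real.log_exp]
  unfold ergmLL
  rw [inner_add_left]
  linarith

lemma ergmLL_add_const (z : ι → E) (t θ w : E) (c : ℝ) (hc : ∀ i, ⟪w, z i⟫ = c) :
    ergmLL z t (θ + w) = ergmLL z t θ + (⟪w, t⟫ - c) := by
  have hsum : ∑ i, Real.exp ⟪θ + w, z i⟫ = Real.exp c * ∑ i, Real.exp ⟪θ, z i⟫ := by
    rw [Finset.mul_sum]
    refine Finset.sum_congr rfl fun i _ => ?_
    rw [inner_add_left, hc i, ← Real.exp_add, add_comm]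
  unfold ergmLL
  rw [inner_add_left, hsum, Real.log_mul (Real.exp_ne_zero _) (ergm_sum_exp_pos z θ).ne',
    Real.log_exp]
  ring

end Aux

section Aux2
variable {E : Type*} [NormedAddCommGroup E] [InnerProductSpace ℝ E]

lemma ergm_mem_intrinsicInterior_iff {s : Set E} {x : E} :
    x ∈ intrinsicInterior ℝ s ↔ x ∈ affineSpan ℝ s ∧
      ∃ ε > 0, ∀ y ∈ affineSpan ℝ s, dist y x < ε → y ∈ s := by
  rw [mem_intrinsicInterior]
  constructor
  · rintro ⟨y, hy, rfl⟩
    refine ⟨y.2, ?_⟩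
    rw [mem_interior_iff_mem_nhds, Metric.mem_nhds_iff] at hy
    obtain ⟨ε, hε, hball⟩ := hy
    refine ⟨ε, hε, fun p hp hd => ?_⟩
    exact hball (show (⟨p, hp⟩ : affineSpan ℝ s) ∈ Metric.ball y ε by
      simpa [Metric.mem_ball, Subtype.dist_eq] using hd)
  · rintro ⟨hx, ε, hε, h⟩
    refine ⟨⟨x, hx⟩, ?_, rfl⟩
    rw [mem_interior_iff_mem_nhds, Metric.mem_nhds_iff]
    exact ⟨ε, hε, fun p hp => h p p.2 (by simpa [Subtype.dist_eq] using hp)⟩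

variable {ι : Type*} [Fintype ι] [Nonempty ι]

lemma ergm_inner_isLinearMap (u : E) : IsLinearMap ℝ (fun x : E => (⟪u, x⟫ : ℝ)) :=
  ⟨fun x y => inner_add_right u x y, fun c x => real_inner_smul_right u x c⟩

lemma ergm_rint_char [FiniteDimensional ℝ E] (z : ι → E) (t : E) :
    t ∈ intrinsicInterior ℝ (convexHull ℝ (Set.range z)) ↔
      t ∈ affineSpan ℝ (Set.range z) ∧
      ∀ u ∈ vectorSpan ℝ (Set.range z), u ≠ 0 → ∃ i, (⟪u, t⟫ : ℝ) < ⟪u, z i⟫ := by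
  have hspan : affineSpan ℝ (convexHull ℝ (Set.range z)) = affineSpan ℝ (Set.range z) :=
    affineSpan_convexHull _
  rw [ergm_mem_intrinsicInterior_iff, hspan]
  constructor
  · rintro ⟨ht, ε, hε, hball⟩
    refine ⟨ht, fun u huV hu0 => ?_⟩
    by_contra h
    push_neg at h
    have hC : convexHull ℝ (Set.range z) ⊆ {x | (⟪u, x⟫ : ℝ) ≤ ⟪u, t⟫} :=
      convexHull_min (by rintro x ⟨i, rfl⟩; exact h i)
        (convex_halfSpace_le (ergm_inner_isLinearMap u) _)
    have hu0' : (0 : ℝ) < ‖u‖ := norm_pos_iff.2 hu0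
    set c : ℝ := ε / (2 * ‖u‖) with hc
    have hcpos : 0 < c := div_pos hε (by positivity)
    set y : E := c • u + t with hy
    have hyspan : y ∈ affineSpan ℝ (Set.range z) := by
      have : (c • u) +ᵥ t ∈ affineSpan ℝ (Set.range z) :=
        AffineSubspace.vadd_mem_of_mem_direction
          (by rw [direction_affineSpan]; exact Submodule.smul_mem _ c huV) ht
      simpa using this
    have hdist : dist y t < ε := by
      have : dist y t = c * ‖u‖ := by
        rw [hy, dist_eq_norm, add_sub_cancel_right, norm_smul, Real.norm_eq_abs,
          abs_of_pos hcpos]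
      rw [this, hc]
      rw [div_mul_eq_mul_div, mul_comm (2:ℝ) ‖u‖, ← div_div]
      rw [mul_div_assoc, div_self hu0'.ne']
      linarith
    have hyC := hC (hball y hyspan hdist)
    have : (⟪u, y⟫ : ℝ) = c * ‖u‖ ^ 2 + ⟪u, t⟫ := by
      rw [hy, inner_add_right, real_inner_smul_right, real_inner_self_eq_norm_sq]
    rw [Set.mem_setOf_eq, this] at hyC
    have hpos : (0:ℝ) < c * ‖u‖ ^ 2 := by positivity
    linarith
  · rintro ⟨ht, hstrict⟩
    set V := vectorSpan ℝ (Set.range z) with hV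
    set i₀ : ι := Classical.arbitrary ι with hi₀
    set p₀ : E := z i₀ with hp₀
    have hp₀C : p₀ ∈ convexHull ℝ (Set.range z) :=
      subset_convexHull ℝ _ (Set.mem_range_self i₀)
    have hp₀span : p₀ ∈ affineSpan ℝ (Set.range z) := mem_affineSpan ℝ (Set.mem_range_self i₀)
    have hdiff : ∀ x ∈ affineSpan ℝ (Set.range z), x - p₀ ∈ V := fun x hx => by
      have := AffineSubspace.vsub_mem_direction hx hp₀span
      rwa [direction_affineSpan] at this
    have htv : t - p₀ ∈ V := hdiff t ht
    set vt : V := ⟨t - p₀, htv⟩ with hvt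
    have hviV : ∀ i, z i - p₀ ∈ V := fun i =>
      vsub_mem_vectorSpan ℝ (Set.mem_range_self i) (Set.mem_range_self i₀)
    set vi : ι → V := fun i => ⟨z i - p₀, hviV i⟩ with hvi
    set D : Set V := {v | p₀ + (v : E) ∈ convexHull ℝ (Set.range z)} with hD
    have hDconv : Convex ℝ D := by
      intro v hv w hw a b ha hb hab
      have hcv := (convex_convexHull ℝ (Set.range z)) hv hw ha hb hab
      show p₀ + ((a • v + b • w : V) : E) ∈ convexHull ℝ (Set.range z)
      have hcast : ((a • v + b • w : V) : E) = a • (v : E) + b • (w : E) := by push_cast; rfl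
      rw [hcast]
      have h2 : a • (p₀ + (v:E)) + b • (p₀ + (w:E)) = (a+b) • p₀ + (a • (v:E) + b • (w:E)) := by
        rw [smul_add, smul_add, add_smul]; abel
      rw [hab, one_smul] at h2
      exact h2 ▸ hcv
    have h0D : (0 : V) ∈ D := by simpa [hD] using hp₀C
    have hviD : ∀ i, vi i ∈ D := fun i => by
      show p₀ + (z i - p₀) ∈ convexHull ℝ (Set.range z)
      simpa using subset_convexHull ℝ _ (Set.mem_range_self i)
    have hspan1 : Submodule.span ℝ (Set.range fun i => z i - p₀) = V := by
      rw [hV, vectorSpan_range_eq_span_range_vsub_right ℝ z i₀]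
      simp [vsub_eq_sub]
      rfl
    have hspanV : Submodule.span ℝ (Set.range vi) = (⊤ : Submodule ℝ V) := by
      apply Submodule.map_injective_of_injective V.injective_subtype
      rw [Submodule.map_span, Submodule.map_top, Submodule.range_subtype]
      have himg : V.subtype '' Set.range vi = Set.range fun i => z i - p₀ := by
        ext x
        constructor
        · rintro ⟨v, ⟨i, rfl⟩, rfl⟩; exact ⟨i, rfl⟩
        · rintro ⟨i, rfl⟩; exact ⟨vi i, ⟨i, rfl⟩, rfl⟩
      rw [himg, hspan1]
    have hDspanTop : affineSpan ℝ D = ⊤ := by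
      rw [eq_top_iff]
      rintro w -
      have hw : w ∈ vectorSpan ℝ D := by
        have hle : Submodule.span ℝ (Set.range vi) ≤ vectorSpan ℝ D := by
          rw [Submodule.span_le]
          rintro x ⟨i, rfl⟩
          have := vsub_mem_vectorSpan ℝ (hviD i) h0D
          simpa using this
        exact hle (hspanV ▸ Submodule.mem_top)
      have := AffineSubspace.vadd_mem_of_mem_direction
        (by rwa [direction_affineSpan]) (mem_affineSpan ℝ h0D)
      simpa using this
    have hintD : (interior D).Nonempty :=
      hDconv.interior_nonempty_iff_affineSpan_eq_top.mpr hDspanTop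
    by_cases hvtD : vt ∈ interior D
    · refine ⟨ht, ?_⟩
      rw [mem_interior_iff_mem_nhds, Metric.mem_nhds_iff] at hvtD
      obtain ⟨ε, hε, hball⟩ := hvtD
      refine ⟨ε, hε, fun y hy hd => ?_⟩
      have hyD : (⟨y - p₀, hdiff y hy⟩ : V) ∈ D := hball (by
        rw [Metric.mem_ball, Subtype.dist_eq]
        show dist (y - p₀) (t - p₀) < ε
        rwa [dist_sub_right])
      simpa [hD] using hyD
    · exfalso
      obtain ⟨f, hf⟩ := geometric_hahn_banach_open_point hDconv.interior isOpen_interior hvtD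
      obtain ⟨x₀, hx₀⟩ := hintD
      have hfD : ∀ a ∈ D, f a ≤ f vt := by
        intro a ha
        have hseg : ∀ s : ℝ, s ∈ Set.Ioc (0:ℝ) 1 → f a + s * (f x₀ - f a) < f vt := by
          intro s hs
          have h1 := hf _ (hDconv.add_smul_sub_mem_interior ha hx₀ hs)
          simpa [map_add, map_smul, map_sub, smul_eq_mul, mul_sub] using h1
        have htend : Filter.Tendsto (fun s : ℝ => f a + s * (f x₀ - f a))
            (nhdsWithin 0 (Set.Ioi 0)) (nhds (f a)) := by
          have h2 : Filter.Tendsto (fun s : ℝ => f a + s * (f x₀ - f a)) (nhds 0)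
              (nhds (f a + 0 * (f x₀ - f a))) :=
            ((continuous_const.add (continuous_id.mul continuous_const)).tendsto 0)
          simpa using h2.mono_left nhdsWithin_le_nhds
        refine le_of_tendsto htend ?_
        filter_upwards [Ioc_mem_nhdsGT_of_mem (Set.mem_Ico.2 ⟨le_refl (0:ℝ), one_pos⟩)]
          with s hs using (hseg s hs).le
      set uf : V := (InnerProductSpace.toDual ℝ V).symm f with huf_def
      have huf : ∀ v : V, (⟪uf, v⟫ : ℝ) = f v := fun v => InnerProductSpace.toDual_symm_apply
      have hufne : uf ≠ 0 := by
        intro h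
        have h1 := hf x₀ hx₀
        have h2 : f x₀ = (0:ℝ) := by rw [← huf x₀, h, inner_zero_left]
        have h3 : f vt = (0:ℝ) := by rw [← huf vt, h, inner_zero_left]
        rw [h2, h3] at h1
        exact lt_irrefl _ h1
      set u : E := (uf : E) with hu_def
      have huV : u ∈ V := uf.2
      have hune : u ≠ 0 := fun h => hufne (by
        rw [hu_def] at h; exact_mod_cast h)
      obtain ⟨i, hi⟩ := hstrict u huV hune
      have hle := hfD (vi i) (hviD i)
      rw [← huf (vi i), ← huf vt] at hle
      rw [Submodule.coe_inner, Submodule.coe_inner] at hle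
      have hle' : (⟪u, z i - p₀⟫ : ℝ) ≤ ⟪u, t - p₀⟫ := hle
      rw [inner_sub_right, inner_sub_right] at hle'
      linarith

end Aux2

/-- With `V = vectorSpan ℝ (z(𝒢_k))`: there exists `θhat ∈ V` at which the likelihood `L`
attains its supremum over all of `ℝⁿ` if and only if `t` lies in the relative interior of
`C = convexHull(z(𝒢_k))`. -/
theorem ergm_MLE_in_V_iff_rint (k n : ℕ) (hk : 0 < k) (hn : 0 < n)
    (z : SimpleGraph (Fin k) → EuclideanSpace ℝ (Fin n))
    (t : EuclideanSpace ℝ (Fin n))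
    (L : EuclideanSpace ℝ (Fin n) → ℝ)
    (hL : L = fun θ => Real.exp
      (⟪θ, t⟫ - Real.log (∑ g : SimpleGraph (Fin k), Real.exp ⟪θ, z g⟫))) :
    (∃ θhat ∈ vectorSpan ℝ (Set.range z), ∀ θ, L θ ≤ L θhat) ↔
      t ∈ intrinsicInterior ℝ (convexHull ℝ (Set.range z)) := by
  classical
  set V := vectorSpan ℝ (Set.range z) with hV
  set ℓ := ergmLL z t with hℓ
  have hLℓ : ∀ θ, L θ = Real.exp (ℓ θ) := fun θ => by rw [hL]; rfl
  have hLle : ∀ θ θ' : EuclideanSpace ℝ (Fin n), L θ ≤ L θ' ↔ ℓ θ ≤ ℓ θ' := fun θ θ' => by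
    rw [hLℓ, hLℓ, Real.exp_le_exp]
  set i₀ : SimpleGraph (Fin k) := Classical.arbitrary _ with hi₀
  set p₀ := z i₀ with hp₀
  have hviV : ∀ i, z i - p₀ ∈ V := fun i =>
    vsub_mem_vectorSpan ℝ (Set.mem_range_self i) (Set.mem_range_self i₀)
  have hspan1 : Submodule.span ℝ (Set.range fun i => z i - p₀) = V := by
    rw [hV, vectorSpan_range_eq_span_range_vsub_right ℝ z i₀]
    simp [vsub_eq_sub]
    rfl
  have horth : ∀ w ∈ Vᗮ, ∀ i, (⟪w, z i⟫ : ℝ) = ⟪w, p₀⟫ := by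
    intro w hw i
    have h0 : (⟪w, z i - p₀⟫ : ℝ) = 0 := by
      have := (Submodule.mem_orthogonal V w).1 hw _ (hviV i)
      rwa [real_inner_comm] at this
    rw [inner_sub_right] at h0
    linarith
  rw [ergm_rint_char]
  constructor
  · rintro ⟨θh, hθV, hmax⟩
    have hmaxℓ : ∀ θ, ℓ θ ≤ ℓ θh := fun θ => (hLle θ θh).1 (hmax θ)
    constructor
    · by_contra ht
      set d := t - p₀ with hd
      set w := d - (Submodule.orthogonalProjection V d : EuclideanSpace ℝ (Fin n)) with hw
      have hwperp : w ∈ Vᗮ := Submodule.sub_starProjection_mem_orthogonal (K := V) d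
      have hwne : w ≠ 0 := by
        intro h
        apply ht
        have hdV : d ∈ V := by
          rw [sub_eq_zero] at h
          rw [h]
          exact (Submodule.orthogonalProjection V d).2
        have h2 : (t - p₀) +ᵥ p₀ ∈ affineSpan ℝ (Set.range z) :=
          AffineSubspace.vadd_mem_of_mem_direction
            (by rw [direction_affineSpan]; exact hdV)
            (mem_affineSpan ℝ (Set.mem_range_self i₀))
        simpa using h2
      have hproj0 : (⟪w, (Submodule.orthogonalProjection V d : EuclideanSpace ℝ (Fin n))⟫ : ℝ) = 0 := by
        have := (Submodule.mem_orthogonal V w).1 hwperp _ (Submodule.orthogonalProjection V d).2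
        rwa [real_inner_comm] at this
      have hwt : (⟪w, t⟫ : ℝ) - ⟪w, p₀⟫ = ‖w‖ ^ 2 := by
        have h1 : (⟪w, d⟫ : ℝ) = ‖w‖ ^ 2 := by
          have hdw : d = w + (Submodule.orthogonalProjection V d : EuclideanSpace ℝ (Fin n)) := by
            rw [hw]; abel
          rw [hdw, inner_add_right, hproj0, real_inner_self_eq_norm_sq]
          ring
        rw [← h1, hd, inner_sub_right]
      have hline := ergmLL_add_const z t θh w (⟪w, p₀⟫ : ℝ) (horth w hwperp)
      have hlt : ℓ θh < ℓ (θh + w) := by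
        rw [hℓ, hline, hwt]
        have hwpos : (0:ℝ) < ‖w‖ ^ 2 := by
          have := norm_pos_iff.2 hwne
          positivity
        linarith
      exact absurd (hmaxℓ (θh + w)) (not_le.2 hlt)
    · intro u huV hu0
      by_contra h
      push_neg at h
      by_cases hstr : ∃ i, (⟪u, z i⟫ : ℝ) < ⟪u, t⟫
      · obtain ⟨i, hi⟩ := hstr
        exact absurd (hmaxℓ (θh + u)) (not_le.2 (ergmLL_lt_add z t θh u h i hi))
      · push_neg at hstr
        have heq : ∀ i, (⟪u, z i⟫ : ℝ) = ⟪u, t⟫ := fun i => le_antisymm (h i) (hstr i)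
        apply hu0
        have huV' : u ∈ Submodule.span ℝ (Set.range fun i => z i - p₀) := by
          rw [hspan1]; exact huV
        have hzero : (⟪u, u⟫ : ℝ) = 0 := by
          refine Submodule.span_induction (p := fun x _ => (⟪x, u⟫ : ℝ) = 0)
            ?_ ?_ ?_ ?_ huV'
          · rintro x ⟨i, rfl⟩
            rw [real_inner_comm, inner_sub_right, heq i, hp₀, heq i₀]
            ring
          · exact inner_zero_left u
          · intro x y hx hy hpx hpy
            rw [inner_add_left, hpx, hpy]; ring
          · intro a x hx hpx
            rw [real_inner_smul_left, hpx]; ring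
        exact inner_self_eq_zero.1 hzero
  · rintro ⟨ht, hstrict⟩
    -- t ∈ affine span: inner products with V-orthogonal vectors match p₀
    have htv : t - p₀ ∈ V := by
      have := AffineSubspace.vsub_mem_direction ht (mem_affineSpan ℝ (Set.mem_range_self i₀))
      rwa [direction_affineSpan] at this
    have hll0 : ∀ w ∈ Vᗮ, (⟪w, t⟫ : ℝ) = ⟪w, p₀⟫ := by
      intro w hw
      have h0 : (⟪w, t - p₀⟫ : ℝ) = 0 := by
        have := (Submodule.mem_orthogonal V w).1 hw _ htv
        rwa [real_inner_comm] at this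
      rw [inner_sub_right] at h0
      linarith
    -- coercivity bound
    have hbound : ∃ R : ℝ, ∀ θ ∈ V, ℓ 0 ≤ ℓ θ → ‖θ‖ ≤ R := by
      set S : Set (EuclideanSpace ℝ (Fin n)) := (V : Set _) ∩ Metric.sphere 0 1 with hS
      rcases Set.eq_empty_or_nonempty S with hSe | hSne
      · refine ⟨0, fun θ hθ _ => ?_⟩
        by_contra hne
        have hθ0 : θ ≠ 0 := by
          intro h; rw [h] at hne; simp at hne
        have : (‖θ‖⁻¹ • θ) ∈ S := by
          constructor
          · exact Submodule.smul_mem V _ hθ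
          · simp [norm_smul, norm_pos_iff.2 hθ0, inv_mul_cancel₀ (norm_ne_zero_iff.2 hθ0)]
        rw [hSe] at this
        exact this
      · have hScompact : IsCompact S :=
          (isCompact_sphere (0 : EuclideanSpace ℝ (Fin n)) 1).inter_left
            (Submodule.closed_of_finiteDimensional V)
        set g : EuclideanSpace ℝ (Fin n) → ℝ :=
          fun u => Finset.univ.sup' Finset.univ_nonempty (fun i => (⟪u, z i - t⟫ : ℝ)) with hg
        have hgcont : Continuous g :=
          Continuous.finset_sup'_apply Finset.univ_nonempty
            (fun i _ => continuous_id.inner continuous_const)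
        obtain ⟨u₀, hu₀S, hmin⟩ := hScompact.exists_isMinOn hSne hgcont.continuousOn
        have hεpos : 0 < g u₀ := by
          have hu₀V : u₀ ∈ V := hu₀S.1
          have hu₀n : ‖u₀‖ = 1 := by simpa using hu₀S.2
          have hu₀0 : u₀ ≠ 0 := by
            intro h; rw [h] at hu₀n; simp at hu₀n
          obtain ⟨i, hi⟩ := hstrict u₀ hu₀V hu₀0
          have : (⟪u₀, z i - t⟫ : ℝ) ≤ g u₀ :=
            Finset.le_sup' (fun j => (⟪u₀, z j - t⟫ : ℝ)) (Finset.mem_univ i)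
          rw [inner_sub_right] at this
          linarith
        refine ⟨max 0 ((- ℓ 0) / g u₀), fun θ hθ hθl => ?_⟩
        rcases eq_or_ne θ 0 with rfl | hθ0
        · simp [le_max_iff]
        · set u := ‖θ‖⁻¹ • θ with hu
          have hθn : (0:ℝ) < ‖θ‖ := norm_pos_iff.2 hθ0
          have huS : u ∈ S := by
            constructor
            · exact Submodule.smul_mem V _ hθ
            · simp [hu, norm_smul, inv_mul_cancel₀ hθn.ne']
          have hgu : g u₀ ≤ g u := hmin huS
          obtain ⟨i, _, hieq⟩ := Finset.exists_mem_eq_sup' Finset.univ_nonempty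
            (fun j => (⟪u, z j - t⟫ : ℝ))
          have hi : g u₀ ≤ (⟪u, z i - t⟫ : ℝ) := by
            rw [← hieq]; exact hgu
          have hθu : θ = ‖θ‖ • u := by
            rw [hu, smul_smul, mul_inv_cancel₀ hθn.ne', one_smul]
          have hllθ : ℓ θ ≤ - (‖θ‖ * g u₀) := by
            have h1 : ℓ θ ≤ (⟪θ, t - z i⟫ : ℝ) := ergmLL_le z t θ i
            have h2 : (⟪θ, t - z i⟫ : ℝ) = - (‖θ‖ * ⟪u, z i - t⟫) := by
              have h4 : (⟪θ, z i - t⟫ : ℝ) = ‖θ‖ * ⟪u, z i - t⟫ := by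
                conv_lhs => rw [hθu]
                rw [real_inner_smul_left]
              rw [show (t - z i) = -(z i - t) by abel, inner_neg_right, h4]
            have h3 : ‖θ‖ * g u₀ ≤ ‖θ‖ * (⟪u, z i - t⟫ : ℝ) :=
              mul_le_mul_of_nonneg_left hi hθn.le
            rw [h2] at h1
            linarith
          have : ‖θ‖ * g u₀ ≤ - ℓ 0 := by linarith
          have : ‖θ‖ ≤ (- ℓ 0) / g u₀ := (le_div_iff₀ hεpos).2 this
          exact le_max_of_le_right this
    obtain ⟨R, hR⟩ := hbound
    set K : Set (EuclideanSpace ℝ (Fin n)) := {θ | θ ∈ V ∧ ℓ 0 ≤ ℓ θ} with hK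
    have hKsub : K ⊆ Metric.closedBall 0 R := by
      rintro θ ⟨hθV, hθl⟩
      rw [Metric.mem_closedBall, dist_zero_right]
      exact hR θ hθV hθl
    have hKclosed : IsClosed K := by
      have h1 : IsClosed (V : Set (EuclideanSpace ℝ (Fin n))) :=
        Submodule.closed_of_finiteDimensional V
      have h2 : IsClosed {θ : EuclideanSpace ℝ (Fin n) | ℓ 0 ≤ ℓ θ} :=
        isClosed_le continuous_const (ergmLL_continuous z t)
      exact h1.inter h2
    have hKcompact : IsCompact K :=
      (isCompact_closedBall (0 : EuclideanSpace ℝ (Fin n)) R).of_isClosed_subset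
        hKclosed hKsub
    have hKne : K.Nonempty := ⟨0, Submodule.zero_mem V, le_refl _⟩
    obtain ⟨θh, hθhK, hθhmax⟩ := hKcompact.exists_isMaxOn hKne (ergmLL_continuous z t).continuousOn
    refine ⟨θh, hθhK.1, fun θ => ?_⟩
    rw [hLle]
    -- reduce to projection
    set p := (Submodule.orthogonalProjection V θ : EuclideanSpace ℝ (Fin n)) with hp
    set w := θ - p with hwdef
    have hwperp : w ∈ Vᗮ := Submodule.sub_starProjection_mem_orthogonal (K := V) θ
    have hθpw : θ = p + w := by rw [hwdef]; abel
    have hconst := ergmLL_add_const z t p w (⟪w, p₀⟫ : ℝ) (horth w hwperp)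
    have hℓθ : ℓ θ = ℓ p := by
      rw [hθpw, hℓ, hconst, hll0 w hwperp]
      ring
    have hpV : p ∈ V := (Submodule.orthogonalProjection V θ).2
    rw [hℓθ]
    rcases le_or_gt (ℓ 0) (ℓ p) with hcase | hcase
    · exact hθhmax ⟨hpV, hcase⟩
    · have h0K : ℓ 0 ≤ ℓ θh := hθhmax ⟨Submodule.zero_mem V, le_refl _⟩
      linarith
end

section
/- Suppose θ ∈ ℝⁿ satisfies θ·t > θ·z(g) for all g ∈ 𝒢_k (for example, θ is a normal vector to a hyperplane separating t from the convex hull C of z(𝒢_k), pointing into the half-space containing t). Then L(rθ) → ∞ as r → ∞; equivalently, ℓ(rθ) → ∞ as r → ∞. -/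
open scoped RealInnerProductSpace BigOperators

/-- If `θ·t > θ·z(g)` for all `g ∈ 𝒢_k` (e.g. `θ` is the normal of a hyperplane
separating `t` from `C`, pointing towards `t`), then `ℓ(rθ) → ∞` and `L(rθ) → ∞`
as `r → ∞`. -/
theorem ergm_likelihood_blows_up (k n : ℕ) (hk : 0 < k) (hn : 0 < n)
    (z : SimpleGraph (Fin k) → EuclideanSpace ℝ (Fin n))
    (t : EuclideanSpace ℝ (Fin n))
    (ℓ : EuclideanSpace ℝ (Fin n) → ℝ)
    (hℓ : ℓ = fun θ => ⟪θ, t⟫ - Real.log (∑ g : SimpleGraph (Fin k), Real.exp ⟪θ, z g⟫))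
    (L : EuclideanSpace ℝ (Fin n) → ℝ) (hL : L = fun θ => Real.exp (ℓ θ))
    (θ : EuclideanSpace ℝ (Fin n))
    (hsep : ∀ g : SimpleGraph (Fin k), ⟪θ, z g⟫ < ⟪θ, t⟫) :
    Filter.Tendsto (fun r : ℝ => L (r • θ)) Filter.atTop Filter.atTop ∧
      Filter.Tendsto (fun r : ℝ => ℓ (r • θ)) Filter.atTop Filter.atTop := by
  have hne : (Finset.univ : Finset (SimpleGraph (Fin k))).Nonempty := Finset.univ_nonempty
  set M : ℝ := Finset.univ.sup' hne (fun g => ⟪θ, z g⟫) with hM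
  have hMlt : M < ⟪θ, t⟫ := by
    rw [hM]
    exact (Finset.sup'_lt_iff hne).2 fun g _ => hsep g
  have hcard : (0 : ℝ) < (Fintype.card (SimpleGraph (Fin k)) : ℝ) := by
    exact_mod_cast Fintype.card_pos
  -- lower bound for ℓ (r • θ)
  have hlb : ∀ r : ℝ, 0 ≤ r →
      r * (⟪θ, t⟫ - M) - Real.log (Fintype.card (SimpleGraph (Fin k))) ≤ ℓ (r • θ) := by
    intro r hr
    rw [hℓ]
    simp only
    have hinner : ∀ x : EuclideanSpace ℝ (Fin n), ⟪r • θ, x⟫ = r * ⟪θ, x⟫ := fun x =>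
      real_inner_smul_left θ x r
    have hsum_le : (∑ g : SimpleGraph (Fin k), Real.exp ⟪r • θ, z g⟫)
        ≤ (Fintype.card (SimpleGraph (Fin k)) : ℝ) * Real.exp (r * M) := by
      rw [← Finset.card_univ, ← nsmul_eq_mul, ← Finset.sum_const]
      apply Finset.sum_le_sum
      intro g _
      rw [hinner]
      apply Real.exp_le_exp.2
      apply mul_le_mul_of_nonneg_left _ hr
      exact Finset.le_sup' (fun g => ⟪θ, z g⟫) (Finset.mem_univ g)
    have hsum_pos : (0 : ℝ) < ∑ g : SimpleGraph (Fin k), Real.exp ⟪r • θ, z g⟫ :=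
      Finset.sum_pos (fun g _ => Real.exp_pos _) hne
    have hlog : Real.log (∑ g : SimpleGraph (Fin k), Real.exp ⟪r • θ, z g⟫)
        ≤ Real.log (Fintype.card (SimpleGraph (Fin k))) + r * M := by
      calc Real.log (∑ g : SimpleGraph (Fin k), Real.exp ⟪r • θ, z g⟫)
          ≤ Real.log ((Fintype.card (SimpleGraph (Fin k)) : ℝ) * Real.exp (r * M)) :=
            Real.log_le_log hsum_pos hsum_le
        _ = Real.log (Fintype.card (SimpleGraph (Fin k))) + r * M := by
            rw [Real.log_mul (ne_of_gt hcard) (Real.exp_ne_zero _), Real.log_exp]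
    rw [hinner]
    nlinarith [hlog]
  have hℓtend : Filter.Tendsto (fun r : ℝ => ℓ (r • θ)) Filter.atTop Filter.atTop := by
    have htend : Filter.Tendsto
        (fun r : ℝ => r * (⟪θ, t⟫ - M) - Real.log (Fintype.card (SimpleGraph (Fin k))))
        Filter.atTop Filter.atTop := by
      apply Filter.tendsto_atTop_add_const_right
      exact Filter.Tendsto.atTop_mul_const (by linarith) Filter.tendsto_id
    apply Filter.tendsto_atTop_mono' Filter.atTop _ htend
    filter_upwards [Filter.eventually_ge_atTop (0 : ℝ)] with r hr using hlb r hr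
  refine ⟨?_, hℓtend⟩
  rw [hL]
  exact Real.tendsto_exp_atTop.comp hℓtend
end

section
/- Let θ ∈ ℝⁿ be any nonzero vector. Then, as r → ∞, the total probability that Pr_{rθ} assigns to the set of graphs whose statistic is extremal in the direction θ tends to 1: lim_{r → ∞} Σ_{g ∈ 𝒢_k, θ·z(g) = M} Pr_{rθ}(g) = 1, where M = max_{ḡ ∈ 𝒢_k} θ·z(ḡ). -/
open scoped RealInnerProductSpace BigOperators

/-- For any nonzero `θ`, as `r → ∞` the total probability that `Pr_{rθ}` assigns to the set
of graphs whose statistic is extremal in the direction `θ` tends to `1`. -/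
theorem ergm_degenerate_mass_concentration (k n : ℕ) (hk : 0 < k) (hn : 0 < n)
    (z : SimpleGraph (Fin k) → EuclideanSpace ℝ (Fin n))
    (Pr : EuclideanSpace ℝ (Fin n) → SimpleGraph (Fin k) → ℝ)
    (hPr : Pr = fun θ g =>
      Real.exp ⟪θ, z g⟫ / ∑ g' : SimpleGraph (Fin k), Real.exp ⟪θ, z g'⟫)
    (θ : EuclideanSpace ℝ (Fin n)) (hθ : θ ≠ 0)
    (M : ℝ)
    (hM : M = Finset.univ.sup' Finset.univ_nonempty fun g : SimpleGraph (Fin k) => ⟪θ, z g⟫) :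
    Filter.Tendsto
      (fun r : ℝ => ∑ g ∈ Finset.univ.filter fun g : SimpleGraph (Fin k) => ⟪θ, z g⟫ = M,
        Pr (r • θ) g)
      Filter.atTop (nhds 1) := by
  subst hPr
  set a : SimpleGraph (Fin k) → ℝ := fun g => ⟪θ, z g⟫ with ha
  have hle : ∀ g, a g ≤ M := by
    intro g; rw [hM]; exact Finset.le_sup' a (Finset.mem_univ g)
  obtain ⟨g₀, -, hg₀⟩ := Finset.exists_mem_eq_sup' Finset.univ_nonempty a
  set S := Finset.univ.filter (fun g => a g = M) with hSdef
  have hg₀S : g₀ ∈ S := by simp [hSdef, hM, hg₀.symm]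
  set N : ℝ := (S.card : ℝ) with hNdef
  have hN : 0 < N := by
    have h : 0 < S.card := Finset.card_pos.mpr ⟨g₀, hg₀S⟩
    rw [hNdef]; exact_mod_cast h
  set T : ℝ → ℝ := fun r => ∑ g : SimpleGraph (Fin k), Real.exp (r * (a g - M)) with hTdef
  have key : ∀ r : ℝ,
      (∑ g ∈ S, Real.exp ⟪r • θ, z g⟫ / ∑ g' : SimpleGraph (Fin k), Real.exp ⟪r • θ, z g'⟫)
        = N / T r := by
    intro r
    have hinner : ∀ g, ⟪r • θ, z g⟫ = r * a g := fun g => real_inner_smul_left θ (z g) r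
    have hnum : ∑ g ∈ S, Real.exp ⟪r • θ, z g⟫ = N * Real.exp (r * M) := by
      rw [Finset.sum_congr rfl (fun g hg => by
        rw [hinner g, (Finset.mem_filter.mp hg).2])]
      simp [hNdef, mul_comm]
    have hden : (∑ g' : SimpleGraph (Fin k), Real.exp ⟪r • θ, z g'⟫)
        = Real.exp (r * M) * T r := by
      rw [hTdef]
      rw [Finset.mul_sum]
      refine Finset.sum_congr rfl fun g _ => ?_
      rw [hinner g, ← Real.exp_add]
      ring_nf
    rw [← Finset.sum_div, hnum, hden, mul_comm N, mul_div_mul_left _ _ (Real.exp_ne_zero _)]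
  have hTlim : Filter.Tendsto T Filter.atTop (nhds N) := by
    have : N = ∑ g : SimpleGraph (Fin k), (if a g = M then (1:ℝ) else 0) := by
      rw [hNdef, Finset.sum_ite, Finset.sum_const, Finset.sum_const]
      simp [hSdef]
    rw [this, hTdef]
    apply tendsto_finset_sum
    intro g _
    by_cases h : a g = M
    · simp only [h, if_pos, sub_self, mul_zero, Real.exp_zero]
      exact tendsto_const_nhds
    · simp only [h, if_neg, if_false]
      have hlt : a g - M < 0 := sub_neg.mpr (lt_of_le_of_ne (hle g) h)
      have : Filter.Tendsto (fun r : ℝ => r * (a g - M)) Filter.atTop Filter.atBot :=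
        Filter.Tendsto.atTop_mul_const_of_neg hlt Filter.tendsto_id
      exact Real.tendsto_exp_atBot.comp this
  have : Filter.Tendsto (fun r => N / T r) Filter.atTop (nhds (N / N)) :=
    Filter.Tendsto.div tendsto_const_nhds hTlim hN.ne'
  rw [div_self hN.ne'] at this
  convert this using 2 with r
  exact key r
end

section
/- If a parameter θ̂ ∈ ℝⁿ is a global maximizer of ℓ, then the target t is a convex combination of the realizable statistics with strictly positive weights: t = Σ_{g ∈ 𝒢_k} Pr_{θ̂}(g) · z(g), where each coefficient Pr_{θ̂}(g) is strictly positive and Σ_{g ∈ 𝒢_k} Pr_{θ̂}(g) = 1. -/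
open scoped RealInnerProductSpace BigOperators

/-- If `θhat` is a global maximizer of the log-likelihood `ℓ`, then `t` is a convex combination
of the realizable statistics with strictly positive weights `Pr_{θhat}(g)` summing to `1`. -/
theorem ergm_maximizer_gives_convex_combination (k n : ℕ) (hk : 0 < k) (hn : 0 < n)
    (z : SimpleGraph (Fin k) → EuclideanSpace ℝ (Fin n))
    (t : EuclideanSpace ℝ (Fin n))
    (ℓ : EuclideanSpace ℝ (Fin n) → ℝ)
    (hℓ : ℓ = fun θ => ⟪θ, t⟫ - Real.log (∑ g : SimpleGraph (Fin k), Real.exp ⟪θ, z g⟫))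
    (Pr : EuclideanSpace ℝ (Fin n) → SimpleGraph (Fin k) → ℝ)
    (hPr : Pr = fun θ g =>
      Real.exp ⟪θ, z g⟫ / ∑ g' : SimpleGraph (Fin k), Real.exp ⟪θ, z g'⟫)
    (θhat : EuclideanSpace ℝ (Fin n)) (hmax : ∀ θ, ℓ θ ≤ ℓ θhat) :
    t = ∑ g : SimpleGraph (Fin k), Pr θhat g • z g ∧
      (∀ g : SimpleGraph (Fin k), 0 < Pr θhat g) ∧
      ∑ g : SimpleGraph (Fin k), Pr θhat g = 1 := by
  set S : ℝ := ∑ g : SimpleGraph (Fin k), Real.exp ⟪θhat, z g⟫ with hS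
  have hSpos : 0 < S := Finset.sum_pos (fun g _ => Real.exp_pos _) Finset.univ_nonempty
  have hPrpos : ∀ g, 0 < Pr θhat g := by
    intro g; rw [hPr]; exact div_pos (Real.exp_pos _) hSpos
  have hsum1 : ∑ g : SimpleGraph (Fin k), Pr θhat g = 1 := by
    rw [hPr]; simp only
    rw [← Finset.sum_div, div_self hSpos.ne']
  refine ⟨?_, hPrpos, hsum1⟩
  -- main part: gradient zero
  have key : ∀ v : EuclideanSpace ℝ (Fin n),
      ⟪v, t⟫ = ∑ g : SimpleGraph (Fin k), Pr θhat g * ⟪v, z g⟫ := by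
    intro v
    set a : SimpleGraph (Fin k) → ℝ := fun g => ⟪θhat, z g⟫ with ha
    set b : SimpleGraph (Fin k) → ℝ := fun g => ⟪v, z g⟫ with hb
    set f : ℝ → ℝ := fun s => s * ⟪v, t⟫ - Real.log (∑ g, Real.exp (a g + s * b g)) with hf
    have hfl : ∀ s, f s = ℓ (θhat + s • v) - ⟪θhat, t⟫ := by
      intro s
      simp only [hf, hℓ, inner_add_left, real_inner_smul_left, ha, hb]
      ring
    have hmaxf : ∀ s, f s ≤ f 0 := by
      intro s
      rw [hfl, hfl]
      have h0 : θhat + (0:ℝ) • v = θhat := by simp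
      rw [h0]
      linarith [hmax (θhat + s • v)]
    have hSs : ∀ s : ℝ, (0:ℝ) < ∑ g, Real.exp (a g + s * b g) :=
      fun s => Finset.sum_pos (fun g _ => Real.exp_pos _) Finset.univ_nonempty
    have hderiv : HasDerivAt f (⟪v, t⟫ - (∑ g, b g * Real.exp (a g)) / S) 0 := by
      have h1 : HasDerivAt (fun s : ℝ => ∑ g, Real.exp (a g + s * b g))
          (∑ g, b g * Real.exp (a g)) 0 := by
        apply HasDerivAt.fun_sum
        intro g _
        have hlin : HasDerivAt (fun s : ℝ => a g + s * b g) (b g) 0 := by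
          simpa using ((hasDerivAt_id (0:ℝ)).mul_const (b g)).const_add (a g)
        simpa [mul_comm] using hlin.exp
      have h2 : HasDerivAt (fun s : ℝ => Real.log (∑ g, Real.exp (a g + s * b g)))
          ((∑ g, b g * Real.exp (a g)) / S) 0 := by
        have := h1.log (hSs 0).ne'
        simpa [hS, ha, div_eq_mul_inv, mul_comm] using this
      have h3 : HasDerivAt (fun s : ℝ => s * ⟪v, t⟫) ⟪v, t⟫ 0 := by
        simpa using (hasDerivAt_id (0:ℝ)).mul_const ⟪v, t⟫
      simpa [hf] using h3.fun_sub h2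
    have hloc : IsLocalMax f 0 := Filter.Eventually.of_forall hmaxf
    have hzero := hloc.hasDerivAt_eq_zero hderiv
    have heq : ⟪v, t⟫ = (∑ g, b g * Real.exp (a g)) / S := by linarith
    rw [heq, Finset.sum_div]
    refine Finset.sum_congr rfl fun g _ => ?_
    have hPg : Pr θhat g = Real.exp (a g) / S := by rw [hPr]
    rw [hPg]
    show b g * Real.exp (a g) / S = Real.exp (a g) / S * b g
    ring
  have hinner : ∀ v : EuclideanSpace ℝ (Fin n),
      ⟪v, t - ∑ g : SimpleGraph (Fin k), Pr θhat g • z g⟫ = 0 := by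
    intro v
    rw [inner_sub_right, inner_sum]
    simp only [real_inner_smul_right]
    linarith [key v]
  have h0 := hinner (t - ∑ g : SimpleGraph (Fin k), Pr θhat g • z g)
  rw [real_inner_self_eq_norm_sq] at h0
  have hnorm : ‖t - ∑ g : SimpleGraph (Fin k), Pr θhat g • z g‖ = 0 :=
    pow_eq_zero_iff (by norm_num : (2:ℕ) ≠ 0) |>.mp h0
  exact sub_eq_zero.mp (norm_eq_zero.mp hnorm)
end
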